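/- arXiv:0903.0091 — 4 statements merged into one kernel-verified Lean document; each statement's English description precedes it below -/
import Mathlib

section
/- In the homotopy category K(B) of complexes over an additive category B, the pair consisting of (the Karoubi-closure of) complexes homotopy equivalent to ones concentrated in non-positive degrees and complexes homotopy equivalent to ones concentrated in non-negative degrees forms a weight structure, with weight decompositions given by stupid truncations of complexes. -/
open CategoryTheory CategoryTheory.Limits CategoryTheory.Pretriangulated CategoryTheory.Category

universe v u

section WS

variable (C : Type u) [Category.{v} C] [Preadditive C] [HasZeroObject C] [HasShift C ℤ]
  [∀ n : ℤ, (CategoryTheory.shiftFunctor C n).Additive] [Pretriangulated C]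

/-- A weight structure on a pretriangulated category, following Bondarko.
`LE` is the class `C^{w≤0}` and `GE` is the class `C^{w≥0}`. -/
structure WeightStructure where
  /-- the class `C^{w≤0}` -/
  LE : C → Prop
  /-- the class `C^{w≥0}` -/
  GE : C → Prop
  /-- `C^{w≤0}` is Karoubi-closed (closed under retracts) -/
  LE_retract : ∀ ⦃X Y : C⦄ (i : X ⟶ Y) (r : Y ⟶ X), i ≫ r = 𝟙 X → LE Y → LE X
  /-- `C^{w≥0}` is Karoubi-closed (closed under retracts) -/
  GE_retract : ∀ ⦃X Y : C⦄ (i : X ⟶ Y) (r : Y ⟶ X), i ≫ r = 𝟙 X → GE Y → GE X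
  /-- `C^{w≤0}` is additive (closed under finite direct sums) -/
  LE_add : ∀ (X Y : C), LE X → LE Y → LE (X ⊞ Y)
  /-- `C^{w≥0}` is additive (closed under finite direct sums) -/
  GE_add : ∀ (X Y : C), GE X → GE Y → GE (X ⊞ Y)
  /-- `C^{w≤0}[1] ⊆ C^{w≤0}` -/
  LE_shift : ∀ (X : C), LE X → LE (X⟦(1:ℤ)⟧)
  /-- `C^{w≥0} ⊆ C^{w≥0}[1]` -/
  GE_shift : ∀ (X : C), GE X → GE (X⟦(-1:ℤ)⟧)
  /-- orthogonality: `Hom(X, Y) = 0` for `X ∈ C^{w≥0}` and `Y ∈ C^{w≤0}[1]` -/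
  orthogonality : ∀ ⦃X Y : C⦄ (f : X ⟶ Y⟦(1:ℤ)⟧), GE X → LE Y → f = 0
  /-- weight decompositions: every `X` sits in a distinguished triangle
  `B[-1] → X → A → B` (equivalently `X → A → B → X[1]`) with `A ∈ C^{w≤0}`, `B ∈ C^{w≥0}` -/
  weight_decomposition : ∀ (X : C), ∃ (A B : C) (_ : LE A) (_ : GE B)
    (a : X ⟶ A) (f : A ⟶ B) (g : B ⟶ X⟦(1:ℤ)⟧), Triangle.mk a f g ∈ distTriang C

end WS

section KB

variable (B : Type u) [Category.{v} B] [Preadditive B] [HasZeroObject B] [HasBinaryBiproducts B]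

/-- objects of `K(B)` that are homotopy equivalent to (i.e. isomorphic in `K(B)` to the image of)
a complex concentrated in non-positive degrees -/
def concentratedNonpos (X : HomotopyCategory B (ComplexShape.up ℤ)) : Prop :=
  ∃ (Y : CochainComplex B ℤ), (∀ n : ℤ, 0 < n → IsZero (Y.X n)) ∧
    Nonempty (((HomotopyCategory.quotient B (ComplexShape.up ℤ)).obj Y) ≅ X)

/-- objects of `K(B)` that are homotopy equivalent to a complex concentrated in
non-negative degrees -/
def concentratedNonneg (X : HomotopyCategory B (ComplexShape.up ℤ)) : Prop :=
  ∃ (Y : CochainComplex B ℤ), (∀ n : ℤ, n < 0 → IsZero (Y.X n)) ∧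
    Nonempty (((HomotopyCategory.quotient B (ComplexShape.up ℤ)).obj Y) ≅ X)

/-- the Karoubi-closure (closure under retracts) of a class of objects -/
def karoubiClosure {D : Type*} [Category D] (S : D → Prop) (X : D) : Prop :=
  ∃ (Y : D) (_ : S Y) (i : X ⟶ Y) (r : Y ⟶ X), i ≫ r = 𝟙 X

section StupidWSAux

open ZeroObject

namespace StupidWS

variable {B : Type u} [Category.{v} B] [Preadditive B] [HasZeroObject B]

/-- stupid truncation: degrees ≤ 0 part -/
noncomputable def tLE (K : CochainComplex B ℤ) : CochainComplex B ℤ where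
  X n := if 0 < n then (0 : B) else K.X n
  d i j :=
    if hi : 0 < i then 0
    else if hj : 0 < j then 0
    else eqToHom (if_neg hi) ≫ K.d i j ≫ eqToHom (if_neg hj).symm
  shape i j h := by
    by_cases hi : 0 < i <;> by_cases hj : 0 < j <;> simp [hi, hj, K.shape i j h]
  d_comp_d' i j k hij hjk := by
    by_cases hi : 0 < i <;> by_cases hj : 0 < j <;> by_cases hk : 0 < k <;> simp [hi, hj, hk]

/-- stupid truncation: degrees ≥ 1 part -/
noncomputable def tGE (K : CochainComplex B ℤ) : CochainComplex B ℤ where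
  X n := if 0 < n then K.X n else (0 : B)
  d i j :=
    if hi : 0 < i then
      if hj : 0 < j then eqToHom (if_pos hi) ≫ K.d i j ≫ eqToHom (if_pos hj).symm
      else 0
    else 0
  shape i j h := by
    by_cases hi : 0 < i <;> by_cases hj : 0 < j <;> simp [hi, hj, K.shape i j h]
  d_comp_d' i j k hij hjk := by
    by_cases hi : 0 < i <;> by_cases hj : 0 < j <;> by_cases hk : 0 < k <;> simp [hi, hj, hk]

lemma tLE_isZero (K : CochainComplex B ℤ) (n : ℤ) (h : 0 < n) : IsZero ((tLE K).X n) := by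
  dsimp [tLE]; rw [if_pos h]; exact isZero_zero B

lemma tGE_isZero (K : CochainComplex B ℤ) (n : ℤ) (h : ¬ 0 < n) : IsZero ((tGE K).X n) := by
  dsimp [tGE]; rw [if_neg h]; exact isZero_zero B

/-- projection onto the stupid truncation -/
noncomputable def πLE (K : CochainComplex B ℤ) : K ⟶ tLE K where
  f n := if h : 0 < n then 0 else eqToHom (if_neg h).symm
  comm' i j hij := by
    obtain rfl : j = i + 1 := hij.symm
    dsimp [tLE]
    by_cases hi : 0 < i <;> by_cases hj : 0 < i + 1 <;> simp [hi, hj] <;>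
      first | omega | exact (tLE_isZero K _ hj).eq_of_tgt _ _

/-- inclusion of the stupid truncation -/
noncomputable def ιGE (K : CochainComplex B ℤ) : tGE K ⟶ K where
  f n := if h : 0 < n then eqToHom (if_pos h) else 0
  comm' i j hij := by
    obtain rfl : j = i + 1 := hij.symm
    dsimp [tGE]
    by_cases hi : 0 < i <;> by_cases hj : 0 < i + 1 <;> simp [hi, hj] <;>
      first | omega | exact (tGE_isZero K _ hi).eq_of_src _ _

/-- the degreewise split short exact sequence given by stupid truncation -/
noncomputable def sc (K : CochainComplex B ℤ) : ShortComplex (CochainComplex B ℤ) :=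
  ShortComplex.mk (ιGE K) (πLE K) (by
    ext n
    dsimp [ιGE, πLE]
    by_cases h : 0 < n <;> simp [h])

/-- the degreewise splittings of `sc K` -/
noncomputable def scSplitting (K : CochainComplex B ℤ) (n : ℤ) :
    ((sc K).map (HomologicalComplex.eval B (ComplexShape.up ℤ) n)).Splitting where
  r := if h : 0 < n then eqToHom (if_pos h).symm else 0
  s := if h : 0 < n then 0 else eqToHom (if_neg h)
  f_r := by
    dsimp [sc, ιGE]
    by_cases h : 0 < n
    · simp [h]
      exact (eqToHom_trans _ _).trans (eqToHom_refl _ _)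
    · exact (tGE_isZero K n h).eq_of_src _ _
  s_g := by
    dsimp [sc, πLE]
    by_cases h : 0 < n
    · exact (tLE_isZero K n h).eq_of_src _ _
    · simp [h]
      exact (eqToHom_trans _ _).trans (eqToHom_refl _ _)
  id := by
    dsimp [sc, ιGE, πLE]
    by_cases h : 0 < n <;> simp [h]
    · exact (congrArg₂ (· + ·) ((eqToHom_trans _ _).trans (eqToHom_refl _ _)) Limits.zero_comp).trans (add_zero _)
    · exact (congrArg₂ (· + ·) Limits.zero_comp ((eqToHom_trans _ _).trans (eqToHom_refl _ _))).trans (zero_add _)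

/-- retract closure of the Karoubi closure -/
lemma karoubi_retract {D : Type*} [Category D] {S : D → Prop} {X Y : D} (i : X ⟶ Y) (r : Y ⟶ X)
    (hir : i ≫ r = 𝟙 X) (hY : karoubiClosure S Y) : karoubiClosure S X := by
  obtain ⟨Z, hZ, i', r', h⟩ := hY
  exact ⟨Z, hZ, i ≫ i', r' ≫ r, by rw [assoc, reassoc_of% h, hir]⟩

/-- the Karoubi closure of a shift-stable class is shift-stable -/
lemma karoubi_shift {D : Type*} [Category D] [HasShift D ℤ] {S S' : D → Prop} (a : ℤ)
    (hS : ∀ X, S X → S' (X⟦a⟧)) {X : D} (hX : karoubiClosure S X) :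
    karoubiClosure S' (X⟦a⟧) := by
  obtain ⟨Z, hZ, i, r, h⟩ := hX
  exact ⟨Z⟦a⟧, hS Z hZ, i⟦a⟧', r⟦a⟧', by rw [← Functor.map_comp, h]; exact (shiftFunctor D a).map_id X⟩

/-- the image of a binary biproduct by an additive functor -/
noncomputable def mapBiprodIso {D D' : Type*} [Category D] [Category D'] [Preadditive D]
    [Preadditive D'] [HasBinaryBiproducts D] [HasBinaryBiproducts D'] (F : D ⥤ D')
    [F.Additive] (P Q : D) : F.obj (P ⊞ Q) ≅ F.obj P ⊞ F.obj Q where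
  hom := biprod.lift (F.map biprod.fst) (F.map biprod.snd)
  inv := biprod.desc (F.map biprod.inl) (F.map biprod.inr)
  hom_inv_id := by
    rw [biprod.lift_desc, ← F.map_comp, ← F.map_comp, ← F.map_add, biprod.total, F.map_id]
  inv_hom_id := by
    apply biprod.hom_ext' <;> apply biprod.hom_ext <;>
      simp [← F.map_comp]

/-- the Karoubi closure of a biproduct-stable class is biproduct-stable -/
lemma karoubi_biprod {D : Type*} [Category D] [Preadditive D] [HasBinaryBiproducts D]
    {S : D → Prop} (hS : ∀ X Y, S X → S Y → S (X ⊞ Y)) {X Y : D}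
    (hX : karoubiClosure S X) (hY : karoubiClosure S Y) : karoubiClosure S (X ⊞ Y) := by
  obtain ⟨Z, hZ, i, r, h⟩ := hX
  obtain ⟨Z', hZ', i', r', h'⟩ := hY
  refine ⟨Z ⊞ Z', hS Z Z' hZ hZ', biprod.map i i', biprod.map r r', ?_⟩
  apply biprod.hom_ext <;> simp [h, h']

end StupidWS

end StupidWSAux

section StupidWSAux2

namespace StupidWS

variable (B : Type u) [Category.{v} B] [Preadditive B] [HasZeroObject B] [HasBinaryBiproducts B]

instance : HasBinaryBiproducts (HomologicalComplex B (ComplexShape.up ℤ)) :=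
  ⟨fun _ _ => inferInstance⟩

lemma nonpos_shift (X : HomotopyCategory B (ComplexShape.up ℤ))
    (hX : concentratedNonpos B X) : concentratedNonpos B (X⟦(1:ℤ)⟧) := by
  obtain ⟨P, hP, ⟨e⟩⟩ := hX
  exact ⟨P⟦(1:ℤ)⟧, fun n hn => hP (n + 1) (by omega),
    ⟨((HomotopyCategory.quotient B (ComplexShape.up ℤ)).commShiftIso (1:ℤ)).app P ≪≫
      (shiftFunctor _ (1:ℤ)).mapIso e⟩⟩

lemma nonneg_shift (X : HomotopyCategory B (ComplexShape.up ℤ))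
    (hX : concentratedNonneg B X) : concentratedNonneg B (X⟦(-1:ℤ)⟧) := by
  obtain ⟨P, hP, ⟨e⟩⟩ := hX
  exact ⟨P⟦(-1:ℤ)⟧, fun n hn => hP (n + (-1)) (by omega),
    ⟨((HomotopyCategory.quotient B (ComplexShape.up ℤ)).commShiftIso (-1:ℤ)).app P ≪≫
      (shiftFunctor _ (-1:ℤ)).mapIso e⟩⟩

lemma nonpos_biprod (X Y : HomotopyCategory B (ComplexShape.up ℤ))
    (hX : concentratedNonpos B X) (hY : concentratedNonpos B Y) :
    concentratedNonpos B (X ⊞ Y) := by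
  obtain ⟨P, hP, ⟨e⟩⟩ := hX
  obtain ⟨Q, hQ, ⟨e'⟩⟩ := hY
  exact ⟨P ⊞ Q,
    fun n hn => IsZero.of_iso ((biprod_isZero_iff _ _).2 ⟨hP n hn, hQ n hn⟩)
      (HomologicalComplex.biprodXIso P Q n),
    ⟨mapBiprodIso (HomotopyCategory.quotient B (ComplexShape.up ℤ)) P Q ≪≫
      biprod.mapIso e e'⟩⟩

lemma nonneg_biprod (X Y : HomotopyCategory B (ComplexShape.up ℤ))
    (hX : concentratedNonneg B X) (hY : concentratedNonneg B Y) :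
    concentratedNonneg B (X ⊞ Y) := by
  obtain ⟨P, hP, ⟨e⟩⟩ := hX
  obtain ⟨Q, hQ, ⟨e'⟩⟩ := hY
  exact ⟨P ⊞ Q,
    fun n hn => IsZero.of_iso ((biprod_isZero_iff _ _).2 ⟨hP n hn, hQ n hn⟩)
      (HomologicalComplex.biprodXIso P Q n),
    ⟨mapBiprodIso (HomotopyCategory.quotient B (ComplexShape.up ℤ)) P Q ≪≫
      biprod.mapIso e e'⟩⟩

lemma hom_zero {P Q : CochainComplex B ℤ} (hP : ∀ n, n < 0 → IsZero (P.X n))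
    (hQ : ∀ n, 0 < n → IsZero (Q.X n))
    (g : (HomotopyCategory.quotient B (ComplexShape.up ℤ)).obj P ⟶
      ((HomotopyCategory.quotient B (ComplexShape.up ℤ)).obj Q)⟦(1:ℤ)⟧) : g = 0 := by
  have e := ((HomotopyCategory.quotient B (ComplexShape.up ℤ)).commShiftIso (1:ℤ)).app Q
  obtain ⟨φ, hφ⟩ := (HomotopyCategory.quotient B (ComplexShape.up ℤ)).map_surjective (g ≫ e.inv)
  have hφ0 : φ = 0 := by
    ext n
    by_cases hn : 0 ≤ n
    · exact (hQ (n + 1) (by omega)).eq_of_tgt _ _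
    · exact (hP n (by omega)).eq_of_src _ _
  rw [← cancel_mono e.inv, ← hφ, hφ0, Functor.map_zero, zero_comp]

end StupidWS

end StupidWSAux2

/-- the 'stupid' weight structure on `K(B)`: the Karoubi-closures of the classes
of complexes homotopy equivalent to ones concentrated in non-positive (resp. non-negative)
degrees form a weight structure on the homotopy category `K(B)`. -/
theorem stupid_weight_structure_on_homotopy_category :
    ∃ w : WeightStructure (HomotopyCategory B (ComplexShape.up ℤ)),
      w.LE = karoubiClosure (concentratedNonpos B) ∧
      w.GE = karoubiClosure (concentratedNonneg B) := by
  refine ⟨{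
    LE := karoubiClosure (concentratedNonpos B)
    GE := karoubiClosure (concentratedNonneg B)
    LE_retract := fun X Y i r hir hY => StupidWS.karoubi_retract i r hir hY
    GE_retract := fun X Y i r hir hY => StupidWS.karoubi_retract i r hir hY
    LE_add := fun X Y hX hY => StupidWS.karoubi_biprod (StupidWS.nonpos_biprod B) hX hY
    GE_add := fun X Y hX hY => StupidWS.karoubi_biprod (StupidWS.nonneg_biprod B) hX hY
    LE_shift := fun X hX => StupidWS.karoubi_shift 1 (StupidWS.nonpos_shift B) hX
    GE_shift := fun X hX => StupidWS.karoubi_shift (-1) (StupidWS.nonneg_shift B) hX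
    orthogonality := fun X Y f hX hY => ?_
    weight_decomposition := fun X => ?_ }, rfl, rfl⟩
  · -- orthogonality
    obtain ⟨X', ⟨P, hP, ⟨eP⟩⟩, i, r, hir⟩ := hX
    obtain ⟨Y', ⟨Q, hQ, ⟨eQ⟩⟩, iY, rY, hiY⟩ := hY
    have hz := StupidWS.hom_zero B hP hQ
      (eP.hom ≫ r ≫ f ≫ iY⟦(1:ℤ)⟧' ≫ eQ.inv⟦(1:ℤ)⟧')
    have h1 : eQ.inv⟦(1:ℤ)⟧' ≫ eQ.hom⟦(1:ℤ)⟧' = 𝟙 _ := by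
      rw [← Functor.map_comp, Iso.inv_hom_id]
      exact (shiftFunctor _ _).map_id _
    have h2 : iY⟦(1:ℤ)⟧' ≫ rY⟦(1:ℤ)⟧' = 𝟙 _ := by
      rw [← Functor.map_comp, hiY]
      exact (shiftFunctor _ _).map_id _
    calc f = (i ≫ r) ≫ f ≫ (iY⟦(1:ℤ)⟧' ≫ rY⟦(1:ℤ)⟧') := by rw [hir, h2]; simp
    _ = i ≫ (eP.inv ≫ eP.hom) ≫ r ≫ f ≫ iY⟦(1:ℤ)⟧' ≫
          (eQ.inv⟦(1:ℤ)⟧' ≫ eQ.hom⟦(1:ℤ)⟧') ≫ rY⟦(1:ℤ)⟧' := by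
        rw [Iso.inv_hom_id, h1]; simp
    _ = i ≫ eP.inv ≫ (eP.hom ≫ r ≫ f ≫ iY⟦(1:ℤ)⟧' ≫ eQ.inv⟦(1:ℤ)⟧') ≫
          eQ.hom⟦(1:ℤ)⟧' ≫ rY⟦(1:ℤ)⟧' := by simp only [assoc]
    _ = 0 := by rw [hz]; simp
  · -- weight decomposition
    obtain ⟨K⟩ := X
    have hT : CochainComplex.trianglehOfDegreewiseSplit (StupidWS.sc K) (StupidWS.scSplitting K) ∈
        distTriang (HomotopyCategory B (ComplexShape.up ℤ)) :=
      (HomotopyCategory.distinguished_iff_iso_trianglehOfDegreewiseSplit _).2 ⟨_, _, ⟨Iso.refl _⟩⟩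
    refine ⟨(HomotopyCategory.quotient B (ComplexShape.up ℤ)).obj (StupidWS.tLE K),
      ((HomotopyCategory.quotient B (ComplexShape.up ℤ)).obj (StupidWS.tGE K))⟦(1:ℤ)⟧,
      ⟨_, ⟨StupidWS.tLE K, StupidWS.tLE_isZero K, ⟨Iso.refl _⟩⟩, 𝟙 _, 𝟙 _, comp_id _⟩,
      ⟨_, ⟨(StupidWS.tGE K)⟦(1:ℤ)⟧, fun n hn => StupidWS.tGE_isZero K (n + 1) (by omega),
        ⟨((HomotopyCategory.quotient B (ComplexShape.up ℤ)).commShiftIso (1:ℤ)).app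
          (StupidWS.tGE K)⟩⟩, 𝟙 _, 𝟙 _, comp_id _⟩,
      _, _, _, rot_of_distTriang _ hT⟩

end KB
end

section
/- Let D be a full additive subcategory of a triangulated category C such that D is negative (Hom(X, Y[i]) = 0 for all X, Y ∈ D and i > 0) and D generates C as a triangulated category. Then there exists a unique weight structure w on C such that D ⊆ C^{w=0}, and its heart is the Karoubi-closure of D in C. -/
open CategoryTheory CategoryTheory.Limits CategoryTheory.Pretriangulated CategoryTheory.Category

universe v u

variable (C : Type u) [Category.{v} C] [Preadditive C] [HasZeroObject C] [HasShift C ℤ]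
  [∀ n : ℤ, (CategoryTheory.shiftFunctor C n).Additive] [Pretriangulated C]

variable {C}

/-- The class of objects of the heart `C^{w=0} = C^{w≤0} ∩ C^{w≥0}` of a weight structure. -/
def WeightStructure.heart (w : WeightStructure C) (X : C) : Prop := w.LE X ∧ w.GE X

namespace WSAux

/-- vanishing of all morphisms `W ⟶ Y` -/
def Zh (W Y : C) : Prop := ∀ f : W ⟶ Y, f = 0

lemma Zh.of_iso_left {W W' Y : C} (h : Zh W Y) (e : W' ≅ W) : Zh W' Y := fun f => by
  have : e.inv ≫ f = 0 := h _
  calc f = e.hom ≫ (e.inv ≫ f) := by simp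
  _ = 0 := by rw [this, comp_zero]

lemma Zh.of_iso_right {W Y Y' : C} (h : Zh W Y) (e : Y ≅ Y') : Zh W Y' := fun f => by
  have : f ≫ e.inv = 0 := h _
  calc f = (f ≫ e.inv) ≫ e.hom := by simp
  _ = 0 := by rw [this, zero_comp]

lemma Zh.shift {W Y : C} (h : Zh W Y) (n : ℤ) : Zh (W⟦n⟧) (Y⟦n⟧) := fun f => by
  have h2 := h ((shiftFunctor C n).preimage f)
  calc f = (shiftFunctor C n).map ((shiftFunctor C n).preimage f) :=
        ((shiftFunctor C n).map_preimage f).symm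
  _ = 0 := by rw [h2, Functor.map_zero]

lemma Zh.of_retract_left {W W' Y : C} (h : Zh W Y) (i : W' ⟶ W) (r : W ⟶ W')
    (hir : i ≫ r = 𝟙 W') : Zh W' Y := fun f => by
  have : r ≫ f = 0 := h _
  calc f = i ≫ (r ≫ f) := by rw [← assoc, hir, id_comp]
  _ = 0 := by rw [this, comp_zero]

lemma Zh.of_retract_right {W Y Y' : C} (h : Zh W Y) (i : Y' ⟶ Y) (r : Y ⟶ Y')
    (hir : i ≫ r = 𝟙 Y') : Zh W Y' := fun f => by
  have : f ≫ i = 0 := h _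
  calc f = (f ≫ i) ≫ r := by rw [assoc, hir, comp_id]
  _ = 0 := by rw [this, zero_comp]

lemma Zh.of_isZero_right {W Y : C} (h : IsZero Y) : Zh W Y := fun f => h.eq_of_tgt f 0

lemma Zh.of_isZero_left {W Y : C} (h : IsZero W) : Zh W Y := fun f => h.eq_of_src f 0

/-- exactness of `Hom(W, -)` on a distinguished triangle -/
lemma Zh.ext_right {W : C} {T : Triangle C} (hT : T ∈ distTriang C)
    (h1 : Zh W T.obj₁) (h3 : Zh W T.obj₃) : Zh W T.obj₂ := fun f => by
  obtain ⟨g, hg⟩ := Triangle.coyoneda_exact₂ T hT f (by rw [h3 (f ≫ T.mor₂)])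
  rw [hg, h1 g, zero_comp]

/-- exactness of `Hom(-, Y)` on a distinguished triangle -/
lemma Zh.ext_left {Y : C} {T : Triangle C} (hT : T ∈ distTriang C)
    (h1 : Zh T.obj₁ Y) (h3 : Zh T.obj₃ Y) : Zh T.obj₂ Y := fun f => by
  obtain ⟨g, hg⟩ := Triangle.yoneda_exact₂ T hT f (h1 _)
  rw [hg, h3 g, comp_zero]

lemma Zh.biprod_right {W X Y : C} (h1 : Zh W X) (h2 : Zh W Y) : Zh W (X ⊞ Y) := fun f => by
  ext
  · rw [h1 (f ≫ biprod.fst), zero_comp]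
  · rw [h2 (f ≫ biprod.snd), zero_comp]

/-- `X⟦a⟧⟦b⟧ ≅ X` when `a + b = 0` -/
abbrev sIso (a b : ℤ) (h : a + b = 0) (X : C) : X⟦a⟧⟦b⟧ ≅ X :=
  (shiftFunctorCompIsoId C a b h).app X

/-- `X⟦a+b⟧ ≅ X⟦a⟧⟦b⟧` -/
abbrev sAdd (a b c : ℤ) (h : a + b = c) (X : C) : X⟦c⟧ ≅ X⟦a⟧⟦b⟧ :=
  (shiftFunctorAdd' C a b c h).app X

lemma Zh.unshift_left_one {W Y : C} (h : Zh (W⟦(-1:ℤ)⟧) Y) : Zh W (Y⟦(1:ℤ)⟧) :=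
  (h.shift 1).of_iso_left (sIso (-1) 1 (by omega) W).symm

lemma Zh.shift_left_one {W Y : C} (h : Zh W (Y⟦(1:ℤ)⟧)) : Zh (W⟦(-1:ℤ)⟧) Y :=
  (h.shift (-1)).of_iso_right ((shiftFunctorCompIsoId C 1 (-1) (by omega)).app Y)

/-- the extension-closed class generated by nonpositive shifts of objects of `S` -/
inductive GClass (S : C → Prop) : C → Prop
  | of {A : C} {n : ℤ} (hA : S A) (hn : n ≤ 0) : GClass S (A⟦n⟧)
  | iso {X Y : C} (e : X ≅ Y) (h : GClass S X) : GClass S Y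
  | ext (T : Triangle C) (hT : T ∈ distTriang C) (h₁ : GClass S T.obj₁)
      (h₃ : GClass S T.obj₃) : GClass S T.obj₂

variable {S : C → Prop}

lemma GClass.of_S {A : C} (hA : S A) : GClass S A :=
  GClass.iso ((shiftFunctorZero C ℤ).app A) (GClass.of hA le_rfl)

lemma GClass.shift_le {W : C} (h : GClass S W) {n : ℤ} (hn : n ≤ 0) : GClass S (W⟦n⟧) := by
  induction h with
  | @of A m hA hm =>
      exact GClass.iso (sAdd m n (m+n) rfl A) (GClass.of hA (by omega))
  | iso e h ih => exact GClass.iso ((shiftFunctor C n).mapIso e) ih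
  | ext T hT h₁ h₃ ih₁ ih₃ =>
      exact GClass.ext _ (Triangle.shift_distinguished T hT n) ih₁ ih₃

lemma GClass.of_isZero (hz : ∃ (Z : C) (_ : IsZero Z), S Z) {X : C} (hX : IsZero X) :
    GClass S X := by
  obtain ⟨Z, hZ, hZS⟩ := hz
  exact GClass.iso (hZ.iso hX) (GClass.of_S hZS)

lemma GClass.biprod {W₁ W₂ : C} (h₁ : GClass S W₁) (h₂ : GClass S W₂) : GClass S (W₁ ⊞ W₂) :=
  GClass.ext _ (binaryBiproductTriangle_distinguished W₁ W₂) h₁ h₂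

/-- the big class `C^{w≤0}`: right orthogonal of `GClass` -/
def LECl (S : C → Prop) (Y : C) : Prop := ∀ W, GClass S W → Zh W (Y⟦(1:ℤ)⟧)

/-- retracts of objects of `S` -/
def RetrS (S : C → Prop) (X : C) : Prop :=
  ∃ (A : C) (_ : S A) (i : X ⟶ A) (r : A ⟶ X), i ≫ r = 𝟙 X

/-- union of `GClass` and all `GE`-classes of weight structures containing `S` in the heart -/
def BigW (S : C → Prop) (W : C) : Prop :=
  GClass S W ∨ ∃ w' : WeightStructure C, (∀ X, S X → w'.heart X) ∧ w'.GE W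

/-- the small-orthogonal `LE`-class used for decompositions -/
def LEs (S : C → Prop) (Y : C) : Prop := ∀ W, BigW S W → Zh W (Y⟦(1:ℤ)⟧)

/-- left orthogonal of `LECl` -/
def QR (S : C → Prop) (V : C) : Prop := ∀ Y, LECl S Y → Zh V (Y⟦(1:ℤ)⟧)

lemma LEs_le_LECl {Y : C} (h : LEs S Y) : LECl S Y := fun W hW => h W (Or.inl hW)

lemma LECl.of_iso {Y Y' : C} (h : LECl S Y) (e : Y ≅ Y') : LECl S Y' := fun W hW =>
  (h W hW).of_iso_right ((shiftFunctor C (1:ℤ)).mapIso e)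

lemma LEs.of_iso {Y Y' : C} (h : LEs S Y) (e : Y ≅ Y') : LEs S Y' := fun W hW =>
  (h W hW).of_iso_right ((shiftFunctor C (1:ℤ)).mapIso e)

lemma QR.of_iso {V V' : C} (h : QR S V) (e : V' ≅ V) : QR S V' := fun Y hY =>
  (h Y hY).of_iso_left e

lemma BigW.shift_neg_one {W : C} (h : BigW S W) : BigW S (W⟦(-1:ℤ)⟧) := by
  rcases h with h | ⟨w', hw', hW⟩
  · exact Or.inl (h.shift_le (by omega))
  · exact Or.inr ⟨w', hw', w'.GE_shift W hW⟩

lemma LECl.shift {Y : C} (h : LECl S Y) : LECl S (Y⟦(1:ℤ)⟧) := fun W hW =>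
  ((h _ (hW.shift_le (by omega : (-1:ℤ) ≤ 0))).shift 1).of_iso_left
    (sIso (-1) 1 (by omega) W).symm

lemma LEs.shift {Y : C} (h : LEs S Y) : LEs S (Y⟦(1:ℤ)⟧) := fun W hW =>
  ((h _ hW.shift_neg_one).shift 1).of_iso_left (sIso (-1) 1 (by omega) W).symm

lemma QR.shift_neg_one {V : C} (h : QR S V) : QR S (V⟦(-1:ℤ)⟧) := fun Y hY =>
  ((h _ hY.shift).shift (-1)).of_iso_right
    ((sIso 1 (-1) (by omega) (Y⟦(1:ℤ)⟧)))

lemma QR_of_GClass {V : C} (h : GClass S V) : QR S V := fun Y hY => hY V h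

/-- negativity pairing: no maps from `GClass` to positive shifts of `S`-objects. -/
lemma pairing (hneg : ∀ (X Y : C), S X → S Y → ∀ (n : ℤ), 0 < n → ∀ (f : X ⟶ Y⟦n⟧), f = 0)
    {W : C} (hW : GClass S W) {B : C} (hB : S B) {m : ℤ} (hm : 0 < m) : Zh W (B⟦m⟧) := by
  induction hW with
  | @of A n hA hn =>
      have h0 : Zh A (B⟦m - n⟧) := fun f => hneg _ _ hA hB _ (by omega) f
      exact (h0.shift n).of_iso_right (sAdd (m-n) n m (by omega) B).symm
  | iso e h ih => exact ih.of_iso_left e.symm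
  | ext T hT h₁ h₃ ih₁ ih₃ => exact Zh.ext_left hT ih₁ ih₃

end WSAux

namespace WSAux2
open WSAux

variable {C : Type u} [Category.{v} C] [Preadditive C] [HasZeroObject C] [HasShift C ℤ]
  [∀ n : ℤ, (CategoryTheory.shiftFunctor C n).Additive] [Pretriangulated C]

/-- if `mor₃ = 0`, `obj₁` is a retract of `obj₂` -/
lemma retract_of_mor₃_zero {T : Triangle C} (hT : T ∈ distTriang C) (h : T.mor₃ = 0) :
    ∃ r : T.obj₂ ⟶ T.obj₁, T.mor₁ ≫ r = 𝟙 T.obj₁ := by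
  obtain ⟨g, hg⟩ := Triangle.yoneda_exact₂ _ (inv_rot_of_distTriang _ hT) (𝟙 T.obj₁)
    (by dsimp [Triangle.invRotate]; rw [h]; simp; exact zero_comp)
  exact ⟨g, hg.symm⟩

/-- if `mor₁ = 0`, `obj₁` is a retract of `obj₃⟦-1⟧` -/
lemma retract_of_mor₁_zero {T : Triangle C} (hT : T ∈ distTriang C) (h : T.mor₁ = 0) :
    ∃ (s : T.obj₁ ⟶ T.obj₃⟦(-1:ℤ)⟧) (r : T.obj₃⟦(-1:ℤ)⟧ ⟶ T.obj₁), s ≫ r = 𝟙 T.obj₁ := by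
  obtain ⟨s, hs⟩ := Triangle.coyoneda_exact₂ _ (inv_rot_of_distTriang _ hT) (𝟙 T.obj₁)
    (by dsimp [Triangle.invRotate]; rw [h]; simp; exact comp_zero)
  exact ⟨s, _, hs.symm⟩

variable (w : WeightStructure C)

lemma WS.GE_iso {X Y : C} (e : X ≅ Y) (h : w.GE X) : w.GE Y :=
  w.GE_retract e.inv e.hom (by simp) h

lemma WS.LE_iso {X Y : C} (e : X ≅ Y) (h : w.LE X) : w.LE Y :=
  w.LE_retract e.inv e.hom (by simp) h

lemma WS.GE_shift_le {X : C} (h : w.GE X) {n : ℤ} (hn : n ≤ 0) : w.GE (X⟦n⟧) := by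
  obtain ⟨m, rfl⟩ : ∃ m : ℕ, n = -(m : ℤ) :=
    ⟨(-n).toNat, by omega⟩
  clear hn
  induction m with
  | zero => exact WS.GE_iso w ((shiftFunctorZero C ℤ).app X).symm h
  | succ k ih =>
      refine WS.GE_iso w ((sAdd (-(k:ℤ)) (-1) (-(k+1:ℕ):ℤ) (by push_cast; ring) X).symm)
        (w.GE_shift _ ih)

lemma WS.LE_shift_ge {X : C} (h : w.LE X) {n : ℤ} (hn : 0 ≤ n) : w.LE (X⟦n⟧) := by
  obtain ⟨m, rfl⟩ : ∃ m : ℕ, n = (m : ℤ) := ⟨n.toNat, by omega⟩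
  clear hn
  induction m with
  | zero => exact WS.LE_iso w ((shiftFunctorZero C ℤ).app X).symm h
  | succ k ih =>
      exact WS.LE_iso w ((sAdd (k:ℤ) 1 ((k+1:ℕ):ℤ) (by push_cast; ring) X).symm)
        (w.LE_shift _ ih)

/-- characterization of `LE` via orthogonality -/
lemma WS.U2 {Y : C} : w.LE Y ↔ ∀ X, w.GE X → Zh X (Y⟦(1:ℤ)⟧) := by
  constructor
  · exact fun hY X hX f => w.orthogonality f hX hY
  · intro hY
    obtain ⟨A, B, hA, hB, a, f, g, hT⟩ := w.weight_decomposition Y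
    have hg : g = 0 := hY B hB g
    obtain ⟨r, hr⟩ := retract_of_mor₃_zero hT hg
    exact w.LE_retract a r hr hA

/-- characterization of `GE` via orthogonality -/
lemma WS.U1 {X : C} : w.GE X ↔ ∀ Y, w.LE Y → Zh X (Y⟦(1:ℤ)⟧) := by
  constructor
  · exact fun hX Y hY f => w.orthogonality f hX hY
  · intro hX
    obtain ⟨A, B, hA, hB, a, f, g, hT⟩ := w.weight_decomposition (X⟦(-1:ℤ)⟧)
    -- pass to the triple rotation, a `⟦1⟧`-shifted copy
    have hT3 := rot_of_distTriang _ (rot_of_distTriang _ (rot_of_distTriang _ hT))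
    -- conjugate the first object by `X ≅ X⟦-1⟧⟦1⟧`
    set κ : X⟦(-1:ℤ)⟧⟦(1:ℤ)⟧ ≅ X := sIso (-1) 1 (by omega) X with hκ
    set T2 : Triangle C := Triangle.mk (κ.inv ≫ (-a⟦(1:ℤ)⟧'))
      ((Triangle.mk a f g).rotate.rotate.rotate.mor₂)
      ((Triangle.mk a f g).rotate.rotate.rotate.mor₃ ≫ κ.hom⟦(1:ℤ)⟧') with hT2def
    have hT2 : T2 ∈ distTriang C := by
      refine isomorphic_distinguished _ hT3 _ ?_
      refine Triangle.isoMk _ _ κ.symm (Iso.refl _) (Iso.refl _) (by simp [T2, Triangle.mk, Triangle.rotate])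
        (by simp [T2, Triangle.mk, Triangle.rotate])
        (by dsimp [T2, Triangle.mk, Triangle.rotate]; simp [← Functor.map_comp])
    have hm1 : T2.mor₁ = 0 := by
      have : κ.inv ≫ (-a⟦(1:ℤ)⟧') = -(κ.inv ≫ a⟦(1:ℤ)⟧') := by simp
      dsimp [T2, Triangle.mk]
      rw [this, hX A hA (κ.inv ≫ a⟦(1:ℤ)⟧'), neg_zero]
      rfl
    obtain ⟨s, r, hsr⟩ := retract_of_mor₁_zero hT2 hm1
    refine w.GE_retract s r hsr ?_
    exact WS.GE_iso w (sIso 1 (-1) (by omega) B).symm hB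

lemma WS.GE_ext {T : Triangle C} (hT : T ∈ distTriang C) (h₁ : w.GE T.obj₁)
    (h₃ : w.GE T.obj₃) : w.GE T.obj₂ := by
  rw [WS.U1]
  intro Y hY
  exact Zh.ext_left hT (fun f => w.orthogonality f h₁ hY) (fun f => w.orthogonality f h₃ hY)

/-- any weight structure whose heart contains `S` has `GClass S` inside `GE` -/
lemma WS.GE_GClass {S : C → Prop} (hh : ∀ X, S X → w.heart X) {W : C}
    (hW : GClass S W) : w.GE W := by
  induction hW with
  | @of A n hA hn => exact WS.GE_shift_le w (hh A hA).2 hn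
  | iso e h ih => exact WS.GE_iso w e ih
  | ext T hT h₁ h₃ ih₁ ih₃ => exact WS.GE_ext w hT ih₁ ih₃

end WSAux2

namespace WSAux3
open WSAux WSAux2

variable {C : Type u} [Category.{v} C] [Preadditive C] [HasZeroObject C] [HasShift C ℤ]
  [∀ n : ℤ, (CategoryTheory.shiftFunctor C n).Additive] [Pretriangulated C]

lemma invRotate_mor₁_shift (T : Triangle C) :
    (shiftFunctorCompIsoId C (-1:ℤ) (1:ℤ) (by omega)).inv.app T.obj₃ ≫
      (T.invRotate.mor₁)⟦(1:ℤ)⟧' = -T.mor₃ := by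
  show (shiftFunctorCompIsoId C (-1:ℤ) (1:ℤ) (by omega)).inv.app T.obj₃ ≫
    ((-T.mor₃⟦(-1:ℤ)⟧' ≫ (shiftFunctorCompIsoId C (1:ℤ) (-1:ℤ) (by omega)).hom.app T.obj₁ :
      T.obj₃⟦(-1:ℤ)⟧ ⟶ T.obj₁))⟦(1:ℤ)⟧' = -T.mor₃
  simp only [Functor.map_neg, Functor.map_comp, Preadditive.comp_neg]
  rw [shift_shiftFunctorCompIsoId_hom_app]
  have hnat := ((shiftFunctorCompIsoId C (-1:ℤ) (1:ℤ) (by omega)).inv.naturality T.mor₃)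
  dsimp at hnat
  rw [← assoc, ← hnat, assoc, Iso.inv_hom_id_app]
  simp

end WSAux3

namespace WSAux3
open WSAux WSAux2

variable {C : Type u} [Category.{v} C] [Preadditive C] [HasZeroObject C] [HasShift C ℤ]
  [∀ n : ℤ, (CategoryTheory.shiftFunctor C n).Additive] [Pretriangulated C]
variable {S : C → Prop}

/-- existence of a weight decomposition with small positive part -/
def HasWD (S : C → Prop) (X : C) : Prop :=
  ∃ (P Q : C) (_ : LEs S P) (_ : GClass S Q) (a : X ⟶ P) (f : P ⟶ Q) (g : Q ⟶ X⟦(1:ℤ)⟧),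
    Triangle.mk a f g ∈ distTriang C

lemma HasWD.of_iso {X X' : C} (e : X ≅ X') (h : HasWD S X) : HasWD S X' := by
  obtain ⟨P, Q, hP, hQ, a, f, g, hT⟩ := h
  refine ⟨P, Q, hP, hQ, e.inv ≫ a, f, g ≫ e.hom⟦(1:ℤ)⟧', ?_⟩
  refine isomorphic_distinguished _ hT _ ?_
  refine Triangle.isoMk _ _ e.symm (Iso.refl _) (Iso.refl _) (by simp [Triangle.mk]) (by simp [Triangle.mk]) ?_
  dsimp [Triangle.mk]
  simp [← Functor.map_comp]

lemma HasWD.ext (T₀ : Triangle C) (hT₀ : T₀ ∈ distTriang C)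
    (h' : HasWD S T₀.obj₁) (h'' : HasWD S T₀.obj₃) : HasWD S T₀.obj₂ := by
  obtain ⟨X', X, X'', u, v, δ⟩ := T₀
  dsimp only at h' h''
  obtain ⟨P', Q', hP', hQ', a', f', g', hD'⟩ := h'
  obtain ⟨P'', Q'', hP'', hQ'', a'', f'', g'', hD''⟩ := h''
  dsimp at *
  -- the map ψ : Q''⟦-1⟧ ⟶ X''
  have hIdist := inv_rot_of_distTriang _ hD''
  set ψ : Q''⟦(-1:ℤ)⟧ ⟶ X'' := (Triangle.mk a'' f'' g'').invRotate.mor₁ with hψ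
  have hQm : GClass S (Q''⟦(-1:ℤ)⟧) := hQ''.shift_le (by omega)
  -- vanishing allowing the lift of `ψ ≫ δ` through `g'`
  have hvan : (ψ ≫ δ) ≫ (Triangle.mk a' f' g').rotate.rotate.mor₂ = 0 := by
    show (ψ ≫ δ) ≫ (-(a'⟦(1:ℤ)⟧')) = 0
    rw [Preadditive.comp_neg, hP' _ (Or.inl hQm) ((ψ ≫ δ) ≫ a'⟦(1:ℤ)⟧'), neg_zero]
  obtain ⟨ht, hR1⟩ := Triangle.coyoneda_exact₂ _
    (rot_of_distTriang _ (rot_of_distTriang _ hD')) (ψ ≫ δ) hvan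
  change Q''⟦(-1:ℤ)⟧ ⟶ Q' at ht
  have hR1' : ψ ≫ δ = ht ≫ g' := hR1
  -- the glued small object `Y`
  obtain ⟨Y, j₁, j₂, hT1⟩ := distinguished_cocone_triangle ht
  -- completion: `γ₁ : Y ⟶ X⟦1⟧`
  have hTm2 := rot_of_distTriang _ (rot_of_distTriang _ hT₀)
  obtain ⟨γ₁, hA, hB⟩ := complete_distinguished_triangle_morphism _ _ hT1 hTm2 ψ g' (by
    exact hR1'.symm)
  change Y ⟶ X⟦(1:ℤ)⟧ at γ₁
  change j₁ ≫ γ₁ = g' ≫ (-(u⟦(1:ℤ)⟧')) at hA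
  change j₂ ≫ ψ⟦(1:ℤ)⟧' = γ₁ ≫ (-(v⟦(1:ℤ)⟧')) at hB
  -- the cone `Pn`
  obtain ⟨Pn, aP, bP, hTP⟩ := distinguished_cocone_triangle₂ (γ₁ : Y ⟶ X⟦(1:ℤ)⟧)
  -- `Y` is in `GClass`
  set κ'' : Q''⟦(-1:ℤ)⟧⟦(1:ℤ)⟧ ≅ Q'' := sIso (-1) 1 (by omega) Q'' with hκ''
  have hYG : GClass S Y := GClass.ext _ (rot_of_distTriang _ hT1) hQ' (GClass.iso κ''.symm hQ'')
  refine ⟨Pn, Y, ?_, hYG, aP, bP, γ₁, hTP⟩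
  -- THE CHASE: `Pn` is right-orthogonal to `BigW`
  intro W hW
  have V1 : Zh W (P'⟦(1:ℤ)⟧) := hP' W hW
  have V2 : Zh W (P''⟦(1:ℤ)⟧) := hP'' W hW
  intro w
  have ID1 : κ''.inv ≫ ψ⟦(1:ℤ)⟧' = -g'' := invRotate_mor₁_shift (Triangle.mk a'' f'' g'')
  have hψ1 : ψ⟦(1:ℤ)⟧' = κ''.hom ≫ (-g'') := by
    rw [← ID1, ← assoc, Iso.hom_inv_id, id_comp]
  set H : Q'' ⟶ Q'⟦(1:ℤ)⟧ := κ''.inv ≫ ht⟦(1:ℤ)⟧' with hH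
  have hHg : H ≫ g'⟦(1:ℤ)⟧' = (-g'') ≫ δ⟦(1:ℤ)⟧' := by
    rw [hH, assoc, ← Functor.map_comp, ← hR1', Functor.map_comp, ← assoc, ID1]
  -- step 1-2
  have hbγ : bP⟦(1:ℤ)⟧' ≫ γ₁⟦(1:ℤ)⟧' = 0 := by
    have h0 := comp_distTriang_mor_zero₃₁ _ (rot_of_distTriang _ (rot_of_distTriang _ hTP))
    change (-(bP⟦(1:ℤ)⟧')) ≫ γ₁⟦(1:ℤ)⟧' = 0 at h0
    rwa [Preadditive.neg_comp, neg_eq_zero] at h0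
  set s : W ⟶ Y⟦(1:ℤ)⟧ := w ≫ bP⟦(1:ℤ)⟧' with hs_def
  have hs : s ≫ γ₁⟦(1:ℤ)⟧' = 0 := by rw [hs_def, assoc, hbγ, comp_zero]
  -- step 3-4 : t = 0
  set t : W ⟶ Q''⟦(-1:ℤ)⟧⟦(1:ℤ)⟧⟦(1:ℤ)⟧ := s ≫ j₂⟦(1:ℤ)⟧' with ht_def
  have h4a : t ≫ (ψ⟦(1:ℤ)⟧')⟦(1:ℤ)⟧' = 0 := by
    rw [ht_def, assoc, ← Functor.map_comp, hB, Functor.map_comp, ← assoc, hs, zero_comp]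
  have ht0 : t = 0 := by
    obtain ⟨t₁, ht₁⟩ := Triangle.coyoneda_exact₂ _
      (rot_of_distTriang _ (rot_of_distTriang _ (rot_of_distTriang _ (rot_of_distTriang _
        (rot_of_distTriang _ hIdist))))) t (by
          show t ≫ (-((-(ψ⟦(1:ℤ)⟧'))⟦(1:ℤ)⟧')) = 0
          rw [Functor.map_neg, neg_neg]
          exact h4a)
    rw [ht₁, V2 t₁]
    exact zero_comp
  -- step 5
  obtain ⟨s₁, hs₁⟩ := Triangle.coyoneda_exact₂ _
    (rot_of_distTriang _ (rot_of_distTriang _ (rot_of_distTriang _ (rot_of_distTriang _ hT1))))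
    s (by
      show s ≫ (-(j₂⟦(1:ℤ)⟧')) = 0
      simp only [Functor.map_neg, Preadditive.comp_neg, neg_eq_zero]
      exact ht0)
  change W ⟶ Q'⟦(1:ℤ)⟧ at s₁
  change s = s₁ ≫ (-(j₁⟦(1:ℤ)⟧')) at hs₁
  have hs₁' : s = -(s₁ ≫ j₁⟦(1:ℤ)⟧') := by
    rw [hs₁]; simp
  -- step 6
  have h6 : (s₁ ≫ g'⟦(1:ℤ)⟧') ≫ (u⟦(1:ℤ)⟧')⟦(1:ℤ)⟧' = 0 := by
    have e2 : s₁ ≫ (j₁⟦(1:ℤ)⟧' ≫ γ₁⟦(1:ℤ)⟧') = 0 := by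
      have e0 : (-(s₁ ≫ j₁⟦(1:ℤ)⟧')) ≫ γ₁⟦(1:ℤ)⟧' = 0 := by rw [← hs₁']; exact hs
      rwa [Preadditive.neg_comp, neg_eq_zero, assoc] at e0
    have e3 : j₁⟦(1:ℤ)⟧' ≫ γ₁⟦(1:ℤ)⟧' = g'⟦(1:ℤ)⟧' ≫ (-((u⟦(1:ℤ)⟧')⟦(1:ℤ)⟧')) := by
      rw [← Functor.map_comp, hA, Functor.map_comp, Functor.map_neg]
    rw [e3] at e2
    simpa using e2
  -- step 7
  obtain ⟨r₁, hr₁⟩ := Triangle.coyoneda_exact₂ _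
    (rot_of_distTriang _ (rot_of_distTriang _ (rot_of_distTriang _ (rot_of_distTriang _
      (rot_of_distTriang _ hT₀))))) (s₁ ≫ g'⟦(1:ℤ)⟧') (by
        show (s₁ ≫ g'⟦(1:ℤ)⟧') ≫ (-((-(u⟦(1:ℤ)⟧'))⟦(1:ℤ)⟧')) = 0
        simp only [Functor.map_neg, neg_neg]
        exact h6)
  change W ⟶ X''⟦(1:ℤ)⟧ at r₁
  change s₁ ≫ g'⟦(1:ℤ)⟧' = r₁ ≫ (-(δ⟦(1:ℤ)⟧')) at hr₁
  have hr₁' : s₁ ≫ g'⟦(1:ℤ)⟧' = -(r₁ ≫ δ⟦(1:ℤ)⟧') := by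
    rw [hr₁]; simp
  -- step 8
  obtain ⟨r₂, hr₂⟩ := Triangle.coyoneda_exact₂ _
    (rot_of_distTriang _ (rot_of_distTriang _ hD'')) r₁ (by
      show r₁ ≫ (-(a''⟦(1:ℤ)⟧')) = 0
      rw [Preadditive.comp_neg, V2 (r₁ ≫ a''⟦(1:ℤ)⟧'), neg_zero])
  change W ⟶ Q'' at r₂
  have hr₂' : r₁ = r₂ ≫ g'' := hr₂
  -- steps 9-10 : s₁ = r₂ ≫ H
  have h10 : s₁ = r₂ ≫ H := by
    obtain ⟨s₄, hs₄⟩ := Triangle.coyoneda_exact₂ _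
      (rot_of_distTriang _ (rot_of_distTriang _ (rot_of_distTriang _ (rot_of_distTriang _ hD'))))
      ((show W ⟶ Q'⟦(1:ℤ)⟧ from s₁) - r₂ ≫ H) (by
        show (s₁ - r₂ ≫ H) ≫ (-(g'⟦(1:ℤ)⟧')) = 0
        rw [Preadditive.comp_neg, neg_eq_zero, Preadditive.sub_comp, assoc, hHg, hr₁', hr₂']
        simp)
    change W ⟶ P'⟦(1:ℤ)⟧ at s₄
    change s₁ - r₂ ≫ H = s₄ ≫ (-(f'⟦(1:ℤ)⟧')) at hs₄
    rw [V1 s₄, zero_comp] at hs₄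
    exact sub_eq_zero.mp hs₄
  -- step 11 : s = 0
  have hs0 : s = 0 := by
    have e5 : ht⟦(1:ℤ)⟧' ≫ j₁⟦(1:ℤ)⟧' = 0 := by
      have e5' : ht ≫ j₁ = 0 := comp_distTriang_mor_zero₁₂ _ hT1
      rw [← Functor.map_comp, e5', Functor.map_zero]
    rw [hs₁', h10, hH, assoc, assoc, e5, comp_zero, comp_zero, neg_zero]
  -- step 12 : factor w through X⟦1⟧
  obtain ⟨x₁, hx₁⟩ := Triangle.coyoneda_exact₂ _
    (rot_of_distTriang _ (rot_of_distTriang _ (rot_of_distTriang _ hTP))) w (by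
      show w ≫ (-(bP⟦(1:ℤ)⟧')) = 0
      rw [Preadditive.comp_neg, neg_eq_zero]
      exact hs0)
  change W ⟶ X⟦(1:ℤ)⟧ at x₁
  change w = x₁ ≫ (-(aP⟦(1:ℤ)⟧')) at hx₁
  -- step 13a
  obtain ⟨y₁, hy₁⟩ := Triangle.coyoneda_exact₂ _
    (rot_of_distTriang _ (rot_of_distTriang _ hD'')) (x₁ ≫ v⟦(1:ℤ)⟧') (by
      show (x₁ ≫ v⟦(1:ℤ)⟧') ≫ (-(a''⟦(1:ℤ)⟧')) = 0
      rw [Preadditive.comp_neg, V2 ((x₁ ≫ v⟦(1:ℤ)⟧') ≫ a''⟦(1:ℤ)⟧'), neg_zero])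
  change W ⟶ Q'' at y₁
  have hy₁' : x₁ ≫ v⟦(1:ℤ)⟧' = y₁ ≫ g'' := hy₁
  -- step 13b
  have h13b : y₁ ≫ H = 0 := by
    obtain ⟨n₁, hn₁⟩ := Triangle.coyoneda_exact₂ _
      (rot_of_distTriang _ (rot_of_distTriang _ (rot_of_distTriang _ (rot_of_distTriang _ hD'))))
      (y₁ ≫ H) (by
        show (y₁ ≫ H) ≫ (-(g'⟦(1:ℤ)⟧')) = 0
        have e8 : v ≫ δ = 0 := comp_distTriang_mor_zero₂₃ _ hT₀
        rw [Preadditive.comp_neg, neg_eq_zero, assoc, hHg, Preadditive.neg_comp,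
          Preadditive.comp_neg, neg_eq_zero, ← assoc, ← hy₁', assoc,
          ← Functor.map_comp, e8, Functor.map_zero, comp_zero])
    change W ⟶ P'⟦(1:ℤ)⟧ at n₁
    change y₁ ≫ H = n₁ ≫ (-(f'⟦(1:ℤ)⟧')) at hn₁
    rw [hn₁, V1 n₁, zero_comp]
  -- step 13c
  set J : Y ⟶ Q'' := j₂ ≫ κ''.hom with hJ
  have hT1c : Triangle.mk j₁ J (-H) ∈ distTriang C := by
    refine isomorphic_distinguished _ (rot_of_distTriang _ hT1) _ ?_
    refine Triangle.isoMk _ _ (Iso.refl _) (Iso.refl _) κ''.symm (by simp [Triangle.mk, Triangle.rotate])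
      (by simp [hJ, Triangle.mk, Triangle.rotate]) ?_
    dsimp [Triangle.mk, Triangle.rotate]
    rw [hH]
    simp
    exact (Preadditive.comp_neg _ _).symm
  obtain ⟨q₁, hq₁⟩ := Triangle.coyoneda_exact₂ _ (rot_of_distTriang _ hT1c) y₁ (by
    show y₁ ≫ (-H) = 0
    rw [Preadditive.comp_neg, neg_eq_zero]
    exact h13b)
  change W ⟶ Y at q₁
  have hq₁' : y₁ = q₁ ≫ J := hq₁
  -- step 13d
  have hJg : J ≫ g'' = γ₁ ≫ v⟦(1:ℤ)⟧' := by
    have e6 : j₂ ≫ (κ''.hom ≫ (-g'')) = γ₁ ≫ (-(v⟦(1:ℤ)⟧')) := by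
      rw [← hψ1]; exact hB
    simp only [Preadditive.comp_neg] at e6
    rw [hJ, assoc]
    exact neg_inj.mp e6
  set x₂ : W ⟶ X⟦(1:ℤ)⟧ :=
    (show W ⟶ X⟦(1:ℤ)⟧ from x₁) - (show W ⟶ X⟦(1:ℤ)⟧ from q₁ ≫ γ₁) with hx₂
  obtain ⟨z₁, hz₁⟩ := Triangle.coyoneda_exact₂ _
    (rot_of_distTriang _ (rot_of_distTriang _ (rot_of_distTriang _ hT₀))) x₂ (by
      show x₂ ≫ (-(v⟦(1:ℤ)⟧')) = 0
      rw [Preadditive.comp_neg, neg_eq_zero, hx₂, Preadditive.sub_comp, assoc, ← hJg, hy₁',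
        hq₁', assoc]
      simp)
  -- step 13f
  change W ⟶ X'⟦(1:ℤ)⟧ at z₁
  change x₂ = z₁ ≫ (-(u⟦(1:ℤ)⟧')) at hz₁
  obtain ⟨z₂, hz₂⟩ := Triangle.coyoneda_exact₂ _
    (rot_of_distTriang _ (rot_of_distTriang _ hD')) z₁ (by
      show z₁ ≫ (-(a'⟦(1:ℤ)⟧')) = 0
      rw [Preadditive.comp_neg, V1 (z₁ ≫ a'⟦(1:ℤ)⟧'), neg_zero])
  -- step 13g
  change W ⟶ Q' at z₂
  have hγa : γ₁ ≫ aP⟦(1:ℤ)⟧' = 0 := comp_distTriang_mor_zero₃₁ _ hTP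
  have hx₂a : x₂ ≫ aP⟦(1:ℤ)⟧' = 0 := by
    have e7 : g' ≫ u⟦(1:ℤ)⟧' = -(j₁ ≫ γ₁) := by
      rw [hA]; simp
    have hz₂' : z₁ = z₂ ≫ g' := hz₂
    rw [hz₁]
    rw [hz₂']
    simp only [Preadditive.comp_neg, Preadditive.neg_comp, neg_eq_zero, assoc]
    rw [← assoc g' (u⟦(1:ℤ)⟧') (aP⟦(1:ℤ)⟧'), e7]
    simp [hγa]
  have hx₁a : x₁ ≫ aP⟦(1:ℤ)⟧' = 0 := by
    have : x₁ = x₂ + q₁ ≫ γ₁ := by rw [hx₂]; abel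
    rw [this, Preadditive.add_comp, hx₂a, assoc, hγa, comp_zero, add_zero]
  rw [hx₁]
  rw [Preadditive.comp_neg, hx₁a, neg_zero]

end WSAux3

namespace WSAux4
open WSAux WSAux2 WSAux3 CategoryTheory.Limits ZeroObject

variable {C : Type u} [Category.{v} C] [Preadditive C] [HasZeroObject C] [HasShift C ℤ]
  [∀ n : ℤ, (CategoryTheory.shiftFunctor C n).Additive] [Pretriangulated C]
variable {S : C → Prop}

lemma LEs_of_S_shift (hneg : ∀ (X Y : C), S X → S Y → ∀ (n : ℤ), 0 < n → ∀ (f : X ⟶ Y⟦n⟧), f = 0)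
    {B : C} (hB : S B) {m : ℤ} (hm : 0 ≤ m) : LEs S (B⟦m⟧) := by
  intro W hW
  rcases hW with hG | ⟨w', hw', hWGE⟩
  · exact (pairing hneg hG hB (show (0:ℤ) < m+1 by omega)).of_iso_right (sAdd m 1 (m+1) rfl B)
  · exact fun f => w'.orthogonality f hWGE (WS.LE_shift_ge w' (hw' B hB).1 hm)

lemma LEs_of_isZero {Z : C} (h : IsZero Z) : LEs S Z := fun W _ =>
  Zh.of_isZero_right ((shiftFunctor C (1:ℤ)).map_isZero h)

lemma HasWD_of_S_shift (hzero : ∃ (Z : C) (_ : IsZero Z), S Z)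
    (hneg : ∀ (X Y : C), S X → S Y → ∀ (n : ℤ), 0 < n → ∀ (f : X ⟶ Y⟦n⟧), f = 0)
    {A : C} (hA : S A) (n : ℤ) : HasWD S (A⟦n⟧) := by
  by_cases hn : 0 ≤ n
  · exact ⟨A⟦n⟧, 0, LEs_of_S_shift hneg hA hn, GClass.of_isZero hzero (isZero_zero C),
      𝟙 _, 0, 0, contractible_distinguished _⟩
  · refine ⟨0, A⟦n⟧⟦(1:ℤ)⟧, LEs_of_isZero (isZero_zero C),
      GClass.iso (sAdd n 1 (n+1) rfl A) (GClass.of hA (by omega)), 0, 0, 𝟙 _,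
      contractible_distinguished₂ _⟩

lemma HasWD_zero (hzero : ∃ (Z : C) (_ : IsZero Z), S Z) {Z : C} (h : IsZero Z) : HasWD S Z :=
  ⟨Z, 0, LEs_of_isZero h, GClass.of_isZero hzero (isZero_zero C), 𝟙 _, 0, 0,
    contractible_distinguished _⟩

lemma main_decomp (hzero : ∃ (Z : C) (_ : IsZero Z), S Z)
    (hneg : ∀ (X Y : C), S X → S Y → ∀ (n : ℤ), 0 < n → ∀ (f : X ⟶ Y⟦n⟧), f = 0)
    (hgen : ∀ (T : ObjectProperty C) [T.IsTriangulated], (∀ X, S X → T X) → ∀ X : C, T X)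
    (X : C) : HasWD S X := by
  have H : ∀ n : ℤ, HasWD S (X⟦n⟧) := by
    refine @hgen (fun X => ∀ n : ℤ, HasWD S (X⟦n⟧)) ?_
      (fun A hA n => HasWD_of_S_shift hzero hneg hA n) X
    refine { exists_zero := ?_, isStableUnderShiftBy := ?_, ext₂' := ?_ }
    · exact ⟨0, isZero_zero C,
        fun n => HasWD_zero hzero ((shiftFunctor C n).map_isZero (isZero_zero C))⟩
    · intro n
      constructor
      intro X h m
      exact (h (n+m)).of_iso (sAdd n m (n+m) rfl X)
    · intro T hT h₁ h₃
      exact ObjectProperty.le_isoClosure _ _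
        (fun n => HasWD.ext _ (Triangle.shift_distinguished T hT n) (h₁ n) (h₃ n))
  exact (H 0).of_iso ((shiftFunctorZero C ℤ).app X)

end WSAux4

namespace WSAux5
open WSAux WSAux2 WSAux3 CategoryTheory.Limits ZeroObject

variable {C : Type u} [Category.{v} C] [Preadditive C] [HasZeroObject C] [HasShift C ℤ]
  [∀ n : ℤ, (CategoryTheory.shiftFunctor C n).Additive] [Pretriangulated C]
variable {S : C → Prop}

/-- dual weight decompositions: small weight-zero part -/
def HasWD2 (S : C → Prop) (X : C) : Prop :=
  ∃ (P Q : C) (_ : RetrS S P) (_ : QR S Q) (a : X ⟶ P) (f : P ⟶ Q) (g : Q ⟶ X⟦(1:ℤ)⟧),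
    Triangle.mk a f g ∈ distTriang C

lemma HasWD2.of_iso {X X' : C} (e : X ≅ X') (h : HasWD2 S X) : HasWD2 S X' := by
  obtain ⟨P, Q, hP, hQ, a, f, g, hT⟩ := h
  refine ⟨P, Q, hP, hQ, e.inv ≫ a, f, g ≫ e.hom⟦(1:ℤ)⟧', ?_⟩
  refine isomorphic_distinguished _ hT _ ?_
  refine Triangle.isoMk _ _ e.symm (Iso.refl _) (Iso.refl _) (by simp [Triangle.mk]) (by simp [Triangle.mk]) ?_
  dsimp [Triangle.mk]
  simp [← Functor.map_comp]

lemma RetrS.of_iso {X X' : C} (e : X ≅ X') (h : RetrS S X) : RetrS S X' := by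
  obtain ⟨A, hA, i, r, hir⟩ := h
  exact ⟨A, hA, e.inv ≫ i, r ≫ e.hom, by rw [assoc, ← assoc i, hir, id_comp]; simp⟩

lemma RetrS.biprod (hadd : ∀ (X Y : C), S X → S Y → S (X ⊞ Y)) {P₁ P₂ : C}
    (h₁ : RetrS S P₁) (h₂ : RetrS S P₂) : RetrS S (P₁ ⊞ P₂) := by
  obtain ⟨A₁, hA₁, i₁, r₁, hir₁⟩ := h₁
  obtain ⟨A₂, hA₂, i₂, r₂, hir₂⟩ := h₂
  exact ⟨A₁ ⊞ A₂, hadd _ _ hA₁ hA₂, biprod.map i₁ i₂, biprod.map r₁ r₂, by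
    ext <;> simp [hir₁, hir₂]⟩

lemma RetrS_of_isZero (hzero : ∃ (Z : C) (_ : IsZero Z), S Z) {X : C} (h : IsZero X) :
    RetrS S X := by
  obtain ⟨Z, hZ, hZS⟩ := hzero
  exact ⟨Z, hZS, 0, 0, by rw [comp_zero, ← h.eq_of_src (𝟙 X) 0]⟩

lemma LECl_of_S (hneg : ∀ (X Y : C), S X → S Y → ∀ (n : ℤ), 0 < n → ∀ (f : X ⟶ Y⟦n⟧), f = 0)
    {A : C} (hA : S A) : LECl S A := fun W hW => pairing hneg hW hA (by omega : (0:ℤ) < 1)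

lemma RetrS_le_LECl (hneg : ∀ (X Y : C), S X → S Y → ∀ (n : ℤ), 0 < n → ∀ (f : X ⟶ Y⟦n⟧), f = 0)
    {P : C} (h : RetrS S P) : LECl S P := by
  obtain ⟨A, hA, i, r, hir⟩ := h
  exact fun W hW => (LECl_of_S hneg hA W hW).of_retract_right (i⟦(1:ℤ)⟧') (r⟦(1:ℤ)⟧')
    (by rw [← Functor.map_comp, hir, CategoryTheory.Functor.map_id])

lemma HasWD2.ext (hneg : ∀ (X Y : C), S X → S Y → ∀ (n : ℤ), 0 < n → ∀ (f : X ⟶ Y⟦n⟧), f = 0)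
    (hadd : ∀ (X Y : C), S X → S Y → S (X ⊞ Y))
    (T₀ : Triangle C) (hT₀ : T₀ ∈ distTriang C) (hG3 : GClass S T₀.obj₃)
    (h' : HasWD2 S T₀.obj₁) (h'' : HasWD2 S T₀.obj₃) : HasWD2 S T₀.obj₂ := by
  obtain ⟨X', X, X'', u, v, δ⟩ := T₀
  dsimp only at h' h''
  obtain ⟨P', Q', hP', hQ', a', f', g', hD'⟩ := h'
  obtain ⟨P'', Q'', hP'', hQ'', a'', f'', g'', hD''⟩ := h''
  dsimp at *
  have hc₁ : δ ≫ a'⟦(1:ℤ)⟧' = 0 := RetrS_le_LECl hneg hP' _ hG3 _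
  have hTB : binaryBiproductTriangle P' P'' ∈ distTriang C :=
    binaryBiproductTriangle_distinguished _ _
  obtain ⟨αs, hαs₁, hαs₂⟩ := complete_distinguished_triangle_morphism _ _
    (rot_of_distTriang _ (rot_of_distTriang _ hT₀))
    (rot_of_distTriang _ (rot_of_distTriang _ hTB)) a'' (a'⟦(1:ℤ)⟧') (by
      show δ ≫ a'⟦(1:ℤ)⟧' = a'' ≫ 0
      rw [hc₁]
      simp)
  change X⟦(1:ℤ)⟧ ⟶ (P' ⊞ P'')⟦(1:ℤ)⟧ at αs
  set α : X ⟶ P' ⊞ P'' := (shiftFunctor C (1:ℤ)).preimage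
    (show ((shiftFunctor C (1:ℤ)).obj X ⟶ (shiftFunctor C (1:ℤ)).obj (P' ⊞ P'')) from αs)
    with hα
  have hαs : α⟦(1:ℤ)⟧' = αs := (shiftFunctor C (1:ℤ)).map_preimage _
  have hAd : u ≫ α = a' ≫ biprod.inl := by
    apply (shiftFunctor C (1:ℤ)).map_injective
    rw [Functor.map_comp, Functor.map_comp, hαs]
    have h1 : (-(u⟦(1:ℤ)⟧')) ≫ αs = a'⟦(1:ℤ)⟧' ≫ (-(biprod.inl⟦(1:ℤ)⟧')) := hαs₁
    rw [Preadditive.neg_comp, Preadditive.comp_neg] at h1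
    exact neg_inj.mp h1
  have hBd : α ≫ biprod.snd = v ≫ a'' := by
    apply (shiftFunctor C (1:ℤ)).map_injective
    rw [Functor.map_comp, Functor.map_comp, hαs]
    have h2 : (-(v⟦(1:ℤ)⟧')) ≫ a''⟦(1:ℤ)⟧' = αs ≫ (-(biprod.snd⟦(1:ℤ)⟧')) := hαs₂
    rw [Preadditive.neg_comp, Preadditive.comp_neg] at h2
    exact (neg_inj.mp h2).symm
  obtain ⟨Qd, β, g, hTQ⟩ := distinguished_cocone_triangle α
  refine ⟨P' ⊞ P'', Qd, RetrS.biprod hadd hP' hP'', ?_, α, β, g, hTQ⟩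
  -- THE DUAL CHASE
  intro Yv hYv q
  have VQ' : Zh Q' (Yv⟦(1:ℤ)⟧) := hQ' Yv hYv
  have VQ'' : Zh Q'' (Yv⟦(1:ℤ)⟧) := hQ'' Yv hYv
  have hαβ : α ≫ β = 0 := comp_distTriang_mor_zero₁₂ _ hTQ
  set s : P' ⊞ P'' ⟶ Yv⟦(1:ℤ)⟧ := β ≫ q with hs_def
  -- step 4 : inl ≫ s = 0
  have ht0 : biprod.inl ≫ s = 0 := by
    have ha't : a' ≫ biprod.inl ≫ s = 0 := by
      rw [← assoc, ← hAd, hs_def, assoc, ← assoc α, hαβ, zero_comp, comp_zero]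
    obtain ⟨g₀, hg₀⟩ := Triangle.yoneda_exact₂ _ hD' (biprod.inl ≫ s) ha't
    have hg₀' : biprod.inl ≫ s = f' ≫ g₀ := hg₀
    rw [hg₀', VQ' g₀, comp_zero]
  -- step 5 : s factors through snd
  obtain ⟨s₁', hs₁₀⟩ := Triangle.yoneda_exact₂ _ hTB s ht0
  set s₁ : P'' ⟶ Yv⟦(1:ℤ)⟧ := s₁' with hs₁def
  have hs₁ : s = biprod.snd ≫ s₁ := hs₁₀
  have hαs0 : α ≫ s = 0 := by rw [hs_def, ← assoc, hαβ, zero_comp]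
  -- step 6-7 : a'' ≫ s₁ factors through δ
  obtain ⟨r₁, hr₁₀⟩ := Triangle.yoneda_exact₂ _ (rot_of_distTriang _ hT₀) (a'' ≫ s₁) (by
    show v ≫ (a'' ≫ s₁) = 0
    rw [← assoc, ← hBd, assoc, ← hs₁, hαs0])
  change X'⟦(1:ℤ)⟧ ⟶ Yv⟦(1:ℤ)⟧ at r₁
  have hr₁ : a'' ≫ s₁ = δ ≫ r₁ := hr₁₀
  -- step 8 : r₁ factors through -a'⟦1⟧
  obtain ⟨r₂, hr₂₀⟩ := Triangle.yoneda_exact₂ _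
    (rot_of_distTriang _ (rot_of_distTriang _ hD')) r₁ (VQ' _)
  change P'⟦(1:ℤ)⟧ ⟶ Yv⟦(1:ℤ)⟧ at r₂
  have hr₂ : r₁ = (-(a'⟦(1:ℤ)⟧')) ≫ r₂ := hr₂₀
  -- step 9-10 : s₁ = 0
  have hs₁0 : s₁ = 0 := by
    have h9 : a'' ≫ s₁ = 0 := by
      rw [hr₁, hr₂, Preadditive.neg_comp, Preadditive.comp_neg, ← assoc, hc₁, zero_comp,
        neg_zero]
    obtain ⟨s₂, hs₂⟩ := Triangle.yoneda_exact₂ _ hD'' s₁ h9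
    change Q'' ⟶ Yv⟦(1:ℤ)⟧ at s₂
    change s₁ = f'' ≫ s₂ at hs₂
    rw [hs₂, VQ'' s₂, comp_zero]
  have hs0 : s = 0 := by rw [hs₁, hs₁0, comp_zero]
  -- step 12 : q factors through g
  obtain ⟨x₁', hx₁₀⟩ := Triangle.yoneda_exact₂ _ (rot_of_distTriang _ hTQ) q hs0
  set x₁ : X⟦(1:ℤ)⟧ ⟶ Yv⟦(1:ℤ)⟧ := x₁' with hx₁def
  have hx₁ : q = g ≫ x₁ := hx₁₀
  -- step 13a : u⟦1⟧ ≫ x₁ factors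
  obtain ⟨y₁, hy₁₀⟩ := Triangle.yoneda_exact₂ _
    (rot_of_distTriang _ (rot_of_distTriang _ hD')) (u⟦(1:ℤ)⟧' ≫ x₁) (by
      exact VQ' _)
  change P'⟦(1:ℤ)⟧ ⟶ Yv⟦(1:ℤ)⟧ at y₁
  have hy₁ : u⟦(1:ℤ)⟧' ≫ x₁ = (-(a'⟦(1:ℤ)⟧')) ≫ y₁ := hy₁₀
  -- step 13c : correction
  set w₂ : (P' ⊞ P'')⟦(1:ℤ)⟧ ⟶ Yv⟦(1:ℤ)⟧ :=
    (biprod.desc ((shiftFunctor C (1:ℤ)).preimage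
      (show ((shiftFunctor C (1:ℤ)).obj P' ⟶ (shiftFunctor C (1:ℤ)).obj Yv) from y₁))
      (0 : P'' ⟶ Yv))⟦(1:ℤ)⟧' with hw₂
  have hinlw : biprod.inl⟦(1:ℤ)⟧' ≫ w₂ = y₁ := by
    rw [hw₂, ← Functor.map_comp, biprod.inl_desc, (shiftFunctor C (1:ℤ)).map_preimage]
  set x₂ : X⟦(1:ℤ)⟧ ⟶ Yv⟦(1:ℤ)⟧ := x₁ + α⟦(1:ℤ)⟧' ≫ w₂ with hx₂
  have hux₂ : u⟦(1:ℤ)⟧' ≫ x₂ = 0 := by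
    rw [hx₂, Preadditive.comp_add, hy₁, ← assoc, ← Functor.map_comp, hAd, Functor.map_comp,
      assoc, hinlw]
    simp
  -- step 13e : x₂ factors through -v⟦1⟧
  obtain ⟨z₁, hz₁₀⟩ := Triangle.yoneda_exact₂ _
    (rot_of_distTriang _ (rot_of_distTriang _ (rot_of_distTriang _ hT₀))) x₂ (by
      show (-(u⟦(1:ℤ)⟧')) ≫ x₂ = 0
      rw [Preadditive.neg_comp, hux₂, neg_zero])
  change X''⟦(1:ℤ)⟧ ⟶ Yv⟦(1:ℤ)⟧ at z₁
  have hz₁ : x₂ = (-(v⟦(1:ℤ)⟧')) ≫ z₁ := hz₁₀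
  -- step 13f : z₁ factors through -a''⟦1⟧
  obtain ⟨z₂, hz₂₀⟩ := Triangle.yoneda_exact₂ _
    (rot_of_distTriang _ (rot_of_distTriang _ hD'')) z₁ (VQ'' _)
  change P''⟦(1:ℤ)⟧ ⟶ Yv⟦(1:ℤ)⟧ at z₂
  have hz₂ : z₁ = (-(a''⟦(1:ℤ)⟧')) ≫ z₂ := hz₂₀
  -- step 13g : conclude
  have hgα : g ≫ α⟦(1:ℤ)⟧' = 0 := comp_distTriang_mor_zero₃₁ _ hTQ
  have hgx₂ : q = g ≫ x₂ := by
    rw [hx₂, Preadditive.comp_add, ← assoc, hgα, zero_comp, add_zero, hx₁]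
  have hva : v⟦(1:ℤ)⟧' ≫ (a''⟦(1:ℤ)⟧' ≫ z₂) = α⟦(1:ℤ)⟧' ≫ (biprod.snd⟦(1:ℤ)⟧' ≫ z₂) := by
    rw [← assoc, ← assoc, ← Functor.map_comp, ← Functor.map_comp, ← hBd]
  rw [hgx₂, hz₁, hz₂]
  simp only [Preadditive.neg_comp, Preadditive.comp_neg, neg_neg]
  rw [hva, ← assoc, hgα, zero_comp]

lemma dual_decomp (hzero : ∃ (Z : C) (_ : IsZero Z), S Z)
    (hadd : ∀ (X Y : C), S X → S Y → S (X ⊞ Y))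
    (hneg : ∀ (X Y : C), S X → S Y → ∀ (n : ℤ), 0 < n → ∀ (f : X ⟶ Y⟦n⟧), f = 0)
    {W : C} (hW : GClass S W) : HasWD2 S W := by
  induction hW with
  | @of A n hA hn =>
      rcases eq_or_lt_of_le hn with h0 | hlt
      · subst h0
        exact ⟨A⟦(0:ℤ)⟧, 0, RetrS.of_iso ((shiftFunctorZero C ℤ).app A).symm ⟨A, hA, 𝟙 A, 𝟙 A, by simp⟩,
          QR_of_GClass (GClass.of_isZero hzero (isZero_zero C)),
          𝟙 _, 0, 0, contractible_distinguished _⟩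
      · refine ⟨0, A⟦n⟧⟦(1:ℤ)⟧, RetrS_of_isZero hzero (isZero_zero C),
          QR.of_iso (QR_of_GClass (GClass.of hA (show n+1 ≤ 0 by omega)))
            (sAdd n 1 (n+1) rfl A).symm, 0, 0, 𝟙 _,
          contractible_distinguished₂ _⟩
  | iso e h ih => exact ih.of_iso e
  | ext T hT h₁ h₃ ih₁ ih₃ => exact HasWD2.ext hneg hadd T hT h₃ ih₁ ih₃

end WSAux5

namespace WSMain
open WSAux WSAux2 WSAux3 WSAux4 WSAux5 CategoryTheory.Limits ZeroObject

variable {C : Type u} [Category.{v} C] [Preadditive C] [HasZeroObject C] [HasShift C ℤ]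
  [∀ n : ℤ, (CategoryTheory.shiftFunctor C n).Additive] [Pretriangulated C]

/-- the weight structure generated by a negative class of generators -/
def theWS (S : C → Prop)
    (hzero : ∃ (Z : C) (_ : IsZero Z), S Z)
    (hneg : ∀ (X Y : C), S X → S Y → ∀ (n : ℤ), 0 < n → ∀ (f : X ⟶ Y⟦n⟧), f = 0)
    (hgen : ∀ (T : ObjectProperty C) [T.IsTriangulated], (∀ X, S X → T X) → ∀ X : C, T X) :
    WeightStructure C where
  LE := LECl S
  GE X := ∃ (W : C) (_ : GClass S W) (i : X ⟶ W) (r : W ⟶ X), i ≫ r = 𝟙 X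
  LE_retract X Y i r hir hY := fun W hW =>
    (hY W hW).of_retract_right (i⟦(1:ℤ)⟧') (r⟦(1:ℤ)⟧')
      (by rw [← Functor.map_comp, hir, CategoryTheory.Functor.map_id])
  GE_retract X Y i r hir := by
    rintro ⟨W, hW, i', r', hir'⟩
    exact ⟨W, hW, i ≫ i', r' ≫ r, by rw [assoc, ← assoc i', hir', id_comp, hir]⟩
  LE_add X Y hX hY := fun W hW f => by
    have h1 : f ≫ biprod.fst⟦(1:ℤ)⟧' = 0 := hX W hW _
    have h2 : f ≫ biprod.snd⟦(1:ℤ)⟧' = 0 := hY W hW _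
    have h3 : f ≫ (𝟙 (X ⊞ Y))⟦(1:ℤ)⟧' = f := by rw [CategoryTheory.Functor.map_id, comp_id]
    rw [← h3, ← biprod.total, Functor.map_add, Preadditive.comp_add, Functor.map_comp,
      Functor.map_comp, ← assoc, h1, zero_comp, ← assoc, h2, zero_comp, add_zero]
  GE_add X Y := by
    rintro ⟨W₁, hW₁, i₁, r₁, hir₁⟩ ⟨W₂, hW₂, i₂, r₂, hir₂⟩
    exact ⟨W₁ ⊞ W₂, GClass.biprod hW₁ hW₂, biprod.map i₁ i₂, biprod.map r₁ r₂, by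
      ext <;> simp [hir₁, hir₂]⟩
  LE_shift X hX := LECl.shift hX
  GE_shift X := by
    rintro ⟨W, hW, i, r, hir⟩
    exact ⟨W⟦(-1:ℤ)⟧, hW.shift_le (by omega), i⟦(-1:ℤ)⟧', r⟦(-1:ℤ)⟧',
      by rw [← Functor.map_comp, hir, CategoryTheory.Functor.map_id]⟩
  orthogonality X Y f hX hY := by
    obtain ⟨W, hW, i, r, hir⟩ := hX
    have h0 : r ≫ f = 0 := hY W hW _
    calc f = i ≫ (r ≫ f) := by rw [← assoc, hir, id_comp]
    _ = 0 := by rw [h0, comp_zero]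
  weight_decomposition X := by
    obtain ⟨P, Q, hP, hQ, a, f, g, hT⟩ := main_decomp hzero hneg hgen X
    exact ⟨P, Q, LEs_le_LECl hP, ⟨Q, hQ, 𝟙 Q, 𝟙 Q, by simp⟩, a, f, g, hT⟩

end WSMain


open WSAux WSAux2 WSAux3 WSAux4 WSAux5 WSMain ZeroObject

/-- if `S` is the class of objects of a full additive subcategory `D ⊆ C` that
is negative (`Hom(X, Y[n]) = 0` for `X, Y ∈ D`, `n > 0`) and generates `C` as a triangulated
category, then there exists a unique weight structure `w` on `C` with `D ⊆ C^{w=0}`;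
its heart is the Karoubi-closure of `D` in `C` (the class of retracts of objects of `D`). -/
theorem weight_structure_from_negative_generators (S : C → Prop)
    (hzero : ∃ (Z : C) (_ : IsZero Z), S Z)
    (hadd : ∀ (X Y : C), S X → S Y → S (X ⊞ Y))
    (hneg : ∀ (X Y : C), S X → S Y → ∀ (n : ℤ), 0 < n → ∀ (f : X ⟶ Y⟦n⟧), f = 0)
    (hgen : ∀ (T : ObjectProperty C) [T.IsTriangulated], (∀ X, S X → T X) → ∀ X : C, T X) :
    ∃ w : WeightStructure C,
      (∀ X, S X → w.heart X) ∧
      (∀ X : C, w.heart X ↔ ∃ (Y : C) (_ : S Y) (ii : X ⟶ Y) (r : Y ⟶ X), ii ≫ r = 𝟙 X) ∧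
      (∀ w' : WeightStructure C, (∀ X, S X → w'.heart X) → w' = w) := by
  refine ⟨theWS S hzero hneg hgen, ?_, ?_, ?_⟩
  · -- S is contained in the heart
    intro X hX
    exact ⟨LECl_of_S hneg hX, ⟨X, GClass.of_S hX, 𝟙 X, 𝟙 X, by simp⟩⟩
  · -- the heart is the Karoubi closure of S
    intro X
    constructor
    · rintro ⟨hLE, W₀, hW₀, i, r, hir⟩
      obtain ⟨P, Q, hP, hQ, a, f, g, hT⟩ := dual_decomp hzero hadd hneg hW₀
      have hvan : (Triangle.mk a f g).invRotate.mor₁ ≫ r = 0 := by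
        have hz : Zh (Q⟦(-1:ℤ)⟧) X :=
          ((hQ X hLE).shift (-1)).of_iso_right (sIso 1 (-1) (by omega) X)
        exact hz _
      obtain ⟨ρ, hρ⟩ := Triangle.yoneda_exact₂ _ (inv_rot_of_distTriang _ hT) r hvan
      change P ⟶ X at ρ
      have hρ' : r = a ≫ ρ := hρ
      obtain ⟨A, hA, iP, rP, hirP⟩ := hP
      refine ⟨A, hA, i ≫ a ≫ iP, rP ≫ ρ, ?_⟩
      have h1 : iP ≫ rP ≫ ρ = ρ := by rw [← assoc, hirP, id_comp]
      rw [assoc, assoc, h1, ← hρ', hir]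
    · rintro ⟨A, hA, ii, r, hir⟩
      exact ⟨RetrS_le_LECl hneg ⟨A, hA, ii, r, hir⟩, ⟨A, GClass.of_S hA, ii, r, hir⟩⟩
  · -- uniqueness
    intro w' hh
    have hG0 : ∀ W, GClass S W → w'.GE W := fun W hW => WS.GE_GClass w' hh hW
    have hL1 : ∀ Y, w'.LE Y → LECl S Y := fun Y hY W hW f =>
      w'.orthogonality f (hG0 W hW) hY
    have hL2 : ∀ Y, LECl S Y → w'.LE Y := by
      intro Y hY
      obtain ⟨P, Q, hP, hQ, a, f, g, hT⟩ := main_decomp hzero hneg hgen Y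
      have hg : g = 0 := hY Q hQ g
      obtain ⟨rr, hrr⟩ := retract_of_mor₃_zero hT hg
      exact w'.LE_retract a rr hrr
        ((WS.U2 w').mpr (fun Xg hXg => hP Xg (Or.inr ⟨w', hh, hXg⟩)))
    have hLEeq : w'.LE = (theWS S hzero hneg hgen).LE :=
      funext fun Y => propext ⟨hL1 Y, hL2 Y⟩
    have hGEeq : w'.GE = (theWS S hzero hneg hgen).GE := by
      funext X
      refine propext ?_
      rw [WS.U1 w', WS.U1 (theWS S hzero hneg hgen), hLEeq]
    obtain ⟨L', G', lr, gr, la, ga, ls, gs, o, wd⟩ := w'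
    dsimp at hLEeq hGEeq
    subst hLEeq
    subst hGEeq
    rfl
end

section
/- Let Φ : C^{op} × D → A be a duality between triangulated categories C and D (a bifunctor, homological in both variables, with natural isomorphisms Φ(X, Y) ≅ Φ(X[1], Y[1])). Suppose a weight structure w on C is orthogonal to a t-structure t on D with respect to Φ. Then for any X ∈ C^{w=0}, the functor Y ↦ Φ(X, Y) restricted to the heart of t is an exact functor between abelian categories. -/
open CategoryTheory CategoryTheory.Limits CategoryTheory.Pretriangulated CategoryTheory.Category

universe v u

variable (C : Type u) [Category.{v} C] [Preadditive C] [HasZeroObject C] [HasShift C ℤ]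
  [∀ n : ℤ, (CategoryTheory.shiftFunctor C n).Additive] [Pretriangulated C]

variable {C}

open Opposite

variable {D : Type*} [Category D] [Preadditive D] [HasZeroObject D] [HasShift D ℤ]
  [∀ n : ℤ, (CategoryTheory.shiftFunctor D n).Additive] [Pretriangulated D]

/-- the class of objects of the heart of a t-structure -/
def heartT (t : Triangulated.TStructure D) (Y : D) : Prop := t.le 0 Y ∧ t.ge 0 Y

/-- let `Φ : Cᵒᵖ × D → A` be a duality (bi-additive, homological in both
variables, with binatural isomorphisms `Φ(X, Y) ≅ Φ(X[1], Y[1])`), and suppose the weight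
structure `w` on `C` is orthogonal to the t-structure `t` on `D` with respect to `Φ`.
Then for any `X ∈ C^{w=0}`, the functor `Y ↦ Φ(X, Y)` is exact on the heart of `t`:
it sends any distinguished triangle in `D` with all vertices in the heart of `t`
(equivalently, any short exact sequence in the heart) to a short exact sequence in `A`. -/
theorem duality_orthogonal_exact_on_heart
    {A : Type*} [Category A] [Abelian A]
    (w : WeightStructure C) (t : Triangulated.TStructure D)
    (Φ : Cᵒᵖ ⥤ D ⥤ A) [∀ X : Cᵒᵖ, (Φ.obj X).Additive] [∀ X : Cᵒᵖ, (Φ.obj X).IsHomological]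
    -- Φ is (co)homological in the first variable
    (hhom₁ : ∀ (T : Triangle C), (T ∈ distTriang C) → ∀ (Y : D),
      ((Φ.map T.mor₂.op).app Y ≫ (Φ.map T.mor₁.op).app Y = 0) ∧
      (∀ hz : (Φ.map T.mor₂.op).app Y ≫ (Φ.map T.mor₁.op).app Y = 0,
        (ShortComplex.mk _ _ hz).Exact))
    -- the binatural isomorphism Φ(X, Y) ≅ Φ(X[1], Y[1])
    (e : ∀ (X : C) (Y : D),
      (Φ.obj (op X)).obj Y ≅ (Φ.obj (op (X⟦(1:ℤ)⟧))).obj (Y⟦(1:ℤ)⟧))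
    (he₁ : ∀ {X X' : C} (f : X ⟶ X') (Y : D),
      (Φ.map f.op).app Y ≫ (e X Y).hom =
        (e X' Y).hom ≫ (Φ.map ((CategoryTheory.shiftFunctor C (1:ℤ)).map f).op).app (Y⟦(1:ℤ)⟧))
    (he₂ : ∀ (X : C) {Y Y' : D} (g : Y ⟶ Y'),
      (Φ.obj (op X)).map g ≫ (e X Y').hom =
        (e X Y).hom ≫ (Φ.obj (op (X⟦(1:ℤ)⟧))).map ((CategoryTheory.shiftFunctor D (1:ℤ)).map g))
    -- orthogonality of w and t with respect to Φ
    (hort₁ : ∀ (X : C) (Y : D), w.LE X → t.ge 1 Y → IsZero ((Φ.obj (op X)).obj Y))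
    (hort₂ : ∀ (X : C) (Y : D), w.GE X → t.le (-1) Y → IsZero ((Φ.obj (op X)).obj Y)) :
    ∀ (X : C), w.heart X → ∀ (T : Triangle D), (T ∈ distTriang D) →
      heartT t T.obj₁ → heartT t T.obj₂ → heartT t T.obj₃ →
      Mono ((Φ.obj (op X)).map T.mor₁) ∧ Epi ((Φ.obj (op X)).map T.mor₂) ∧
      ((Φ.obj (op X)).map T.mor₁ ≫ (Φ.obj (op X)).map T.mor₂ = 0) ∧
      (∀ hz : (Φ.obj (op X)).map T.mor₁ ≫ (Φ.obj (op X)).map T.mor₂ = 0,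
        (ShortComplex.mk _ _ hz).Exact) := by
  intro X hX T hT h1 h2 h3
  set F := Φ.obj (op X) with hF
  -- zero objects from orthogonality
  have hz₃ : IsZero (F.obj (T.obj₃⟦(-1:ℤ)⟧)) :=
    hort₁ X _ hX.1 (t.ge_shift 0 (-1) 1 (by omega) _ h3.2)
  have hz₁ : IsZero (F.obj (T.obj₁⟦(1:ℤ)⟧)) :=
    hort₂ X _ hX.2 (t.le_shift 0 1 (-1) (by omega) _ h1.1)
  -- mono from the inverse rotation
  have hmono : Mono (F.map T.mor₁) := by
    have hexact := F.map_distinguished_exact _ (inv_rot_of_distTriang T hT)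
    have hf : ((shortComplexOfDistTriangle T.invRotate
        (inv_rot_of_distTriang T hT)).map F).f = 0 := hz₃.eq_of_src _ _
    exact hexact.mono_g hf
  -- epi from the rotation
  have hepi : Epi (F.map T.mor₂) := by
    have hexact := F.map_distinguished_exact _ (rot_of_distTriang T hT)
    have hg : ((shortComplexOfDistTriangle T.rotate
        (rot_of_distTriang T hT)).map F).g = 0 := hz₁.eq_of_tgt _ _
    exact hexact.epi_f hg
  have hzero : F.map T.mor₁ ≫ F.map T.mor₂ = 0 := by
    rw [← F.map_comp, comp_distTriang_mor_zero₁₂ T hT, F.map_zero]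
  exact ⟨hmono, hepi, hzero, fun hz => F.map_distinguished_exact T hT⟩
end

section
/- Let D →^{i_*} C →^{j^*} E be a short exact sequence of triangulated categories (i_* a full embedding, j^* the Verdier localization of C by the image of i_*). Suppose D and E are endowed with weight structures w_D and w_E. Then there exists at most one weight structure w on C such that i_* and j^* are both weight-exact (i.e. i_*(D^{w_D≤0}) ⊆ C^{w≤0}, i_*(D^{w_D≥0}) ⊆ C^{w≥0}, and similarly for j^*). -/
open CategoryTheory CategoryTheory.Limits CategoryTheory.Pretriangulated CategoryTheory.Category

universe v u

variable (C : Type u) [Category.{v} C] [Preadditive C] [HasZeroObject C] [HasShift C ℤ]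
  [∀ n : ℤ, (CategoryTheory.shiftFunctor C n).Additive] [Pretriangulated C]

variable {C}

variable {D : Type*} [Category D] [Preadditive D] [HasZeroObject D] [HasShift D ℤ]
  [∀ n : ℤ, (CategoryTheory.shiftFunctor D n).Additive] [Pretriangulated D]
variable {E : Type*} [Category E] [Preadditive E] [HasZeroObject E] [HasShift E ℤ]
  [∀ n : ℤ, (CategoryTheory.shiftFunctor E n).Additive] [Pretriangulated E]

/-- the class of morphisms of `C` whose cone lies in the essential image of `i : D ⥤ C`;
the Verdier quotient of `C` by (the image of) `D` is the localization at this class -/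
def coneInImage (i : D ⥤ C) : MorphismProperty C :=
  fun _ X f => ∃ (Z : D) (g : X ⟶ i.obj Z) (h : i.obj Z ⟶ _⟦(1:ℤ)⟧),
    Triangle.mk f g h ∈ distTriang C

lemma WS_LE_of_orth (w : WeightStructure C) (X : C)
    (h : ∀ (G : C), w.GE G → ∀ (f : G ⟶ X⟦(1:ℤ)⟧), f = 0) : w.LE X := by
  obtain ⟨A, B, hA, hB, a, p, q, hT⟩ := w.weight_decomposition X
  have hq : q = 0 := h B hB q
  have hT' := inv_rot_of_distTriang _ hT
  obtain ⟨r, hr⟩ := Triangle.yoneda_exact₂ _ hT' (𝟙 X) (by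
    dsimp [Triangle.invRotate]
    rw [hq]
    delta Triangle.mk; simp
    rfl)
  exact w.LE_retract a r hr.symm hA

lemma WS_GE_of_orth (w : WeightStructure C) (X : C)
    (h : ∀ (L : C), w.LE L → ∀ (f : X ⟶ L⟦(1:ℤ)⟧), f = 0) : w.GE X := by
  obtain ⟨A, B, hA, hB, a, p, q, hT⟩ := w.weight_decomposition (X⟦(-1:ℤ)⟧)
  have hT' := rot_of_distTriang _ hT
  set e := (shiftEquiv C (1:ℤ)).counitIso.app X with he
  have h0 : e.inv ≫ (Triangle.mk a p q).rotate.mor₃ = 0 := by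
    exact (Preadditive.comp_neg _ _).trans ((congrArg Neg.neg (h A hA _)).trans neg_zero)
  obtain ⟨s, hs⟩ := Triangle.coyoneda_exact₃ _ hT' e.inv h0
  refine w.GE_retract s (q ≫ e.hom) ?_ hB
  have hs' : e.inv = s ≫ q := hs
  exact (assoc s q e.hom).symm.trans ((congrArg (· ≫ e.hom) hs'.symm).trans e.inv_hom_id)

/-- The multiplicative closure of a morphism property. -/
inductive MClo (W : MorphismProperty C) : MorphismProperty C
  | of {X Y : C} (f : X ⟶ Y) (hf : W f) : MClo W f
  | id (X : C) : MClo W (𝟙 X)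
  | comp {X Y Z : C} (f : X ⟶ Y) (g : Y ⟶ Z) (hf : MClo W f) (hg : MClo W g) :
      MClo W (f ≫ g)

instance (W : MorphismProperty C) : (MClo W).IsMultiplicative where
  id_mem X := MClo.id X
  comp_mem f g hf hg := MClo.comp f g hf hg

section

variable (i : D ⥤ C)

open ZeroObject in
lemma cii_of_isIso [i.CommShift ℤ] [i.IsTriangulated] {X Y : C} (f : X ⟶ Y) [IsIso f] : coneInImage i f := by
  refine ⟨0, 0, 0, isomorphic_distinguished _ (contractible_distinguished Y) _ ?_⟩
  delta contractibleTriangle Triangle.mk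
  refine Triangle.isoMk _ _ (asIso f : X ≅ Y) (Iso.refl _) ((i.map_isZero (isZero_zero D)).isoZero)
    (by simp) (by simp) (by simp)

/-- single-step left Ore condition -/
lemma cii_ore {X' X Y : C} (s : X' ⟶ X) (hs : coneInImage i s) (f : X' ⟶ Y) :
    ∃ (Y' : C) (t : Y ⟶ Y') (g : X ⟶ Y'), coneInImage i t ∧ f ≫ t = s ≫ g := by
  obtain ⟨Z, g₀, h₀, hT⟩ := hs
  have hinv := inv_rot_of_distTriang _ hT
  obtain ⟨Y', t, d, hTc⟩ := distinguished_cocone_triangle ((Triangle.mk s g₀ h₀).invRotate.mor₁ ≫ f)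
  have hrot := rot_of_distTriang _ hTc
  set ε := (shiftEquiv C (1:ℤ)).counitIso.app (i.obj Z) with hε
  have hcone : coneInImage i t := by
    refine ⟨Z, d ≫ ε.hom, ε.inv ≫ (Triangle.mk ((Triangle.mk s g₀ h₀).invRotate.mor₁ ≫ f) t d).rotate.mor₃,
      isomorphic_distinguished _ hrot _ ?_⟩
    delta Triangle.rotate Triangle.mk
    exact Triangle.isoMk _ _ (Iso.refl _) (Iso.refl _) ε.symm (by simp)
      ((assoc _ _ _).trans ((congrArg (d ≫ ·) ε.hom_inv_id).trans ((comp_id d).trans (id_comp d).symm))) (by simp; rfl)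
  have h0 : (Triangle.mk s g₀ h₀).invRotate.mor₁ ≫ f ≫ t = 0 := by
    exact (assoc _ _ _).symm.trans (comp_distTriang_mor_zero₁₂ _ hTc)
  obtain ⟨g, hg⟩ := Triangle.yoneda_exact₂ _ hinv (f ≫ t) h0
  exact ⟨Y', t, g, hcone, hg⟩

/-- single-step "ext" condition: a morphism killed by precomposition with a morphism in
`coneInImage i` is killed by postcomposition with a morphism in `coneInImage i`. -/
lemma cii_ext [i.CommShift ℤ] {X' X Y : C} (s : X' ⟶ X) (hs : coneInImage i s)
    (h : X ⟶ Y) (hh : s ≫ h = 0) :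
    ∃ (Y' : C) (t : Y ⟶ Y'), coneInImage i t ∧ h ≫ t = 0 := by
  obtain ⟨Z, g₀, h₀, hT⟩ := hs
  obtain ⟨u, hu⟩ := Triangle.yoneda_exact₂ _ hT h hh
  obtain ⟨Y', t, d, hTu⟩ := distinguished_cocone_triangle u
  have hrot := rot_of_distTriang _ hTu
  set η := (i.commShiftIso (1:ℤ)).app Z with hη
  refine ⟨Y', t, ⟨Z⟦(1:ℤ)⟧, d ≫ η.inv, η.hom ≫ (Triangle.mk u t d).rotate.mor₃,
      isomorphic_distinguished _ hrot _ ?_⟩, ?_⟩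
  · delta Triangle.rotate Triangle.mk
    exact Triangle.isoMk _ _ (Iso.refl _) (Iso.refl _) η (by simp)
      ((assoc _ _ _).trans ((congrArg (d ≫ ·) η.inv_hom_id).trans ((comp_id d).trans (id_comp d).symm))) (by simp)
  · have hz : u ≫ t = 0 := comp_distTriang_mor_zero₁₂ _ hTu
    rw [hu]
    exact (assoc _ _ _).trans ((congrArg (_ ≫ ·) hz).trans comp_zero)

/-- left Ore condition for the multiplicative closure -/
lemma mclo_ore {X' X : C} (s : X' ⟶ X) (hs : MClo (coneInImage i) s) :
    ∀ {Y : C} (f : X' ⟶ Y), ∃ (Y' : C) (t : Y ⟶ Y') (g : X ⟶ Y'),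
      MClo (coneInImage i) t ∧ f ≫ t = s ≫ g := by
  induction hs with
  | of s hs =>
      intro Y f
      obtain ⟨Y', t, g, ht, hc⟩ := cii_ore i s hs f
      exact ⟨Y', t, g, MClo.of t ht, hc⟩
  | id M =>
      intro Y f
      exact ⟨Y, 𝟙 Y, f, MClo.id Y, by simp⟩
  | comp u v hu hv ihu ihv =>
      intro Y f
      obtain ⟨Y₁, t₁, g₁, ht₁, hc₁⟩ := ihu f
      obtain ⟨Y₂, t₂, g₂, ht₂, hc₂⟩ := ihv g₁
      exact ⟨Y₂, t₁ ≫ t₂, g₂, MClo.comp _ _ ht₁ ht₂, by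
        rw [← assoc, hc₁, assoc, hc₂, ← assoc]⟩

lemma mclo_ext [i.CommShift ℤ] {X' X : C} (s : X' ⟶ X) (hs : MClo (coneInImage i) s) :
    ∀ {Y : C} (f₁ f₂ : X ⟶ Y), s ≫ f₁ = s ≫ f₂ →
      ∃ (Y' : C) (t : Y ⟶ Y'), MClo (coneInImage i) t ∧ f₁ ≫ t = f₂ ≫ t := by
  induction hs with
  | of s hs =>
      intro Y f₁ f₂ h
      obtain ⟨Y', t, ht, hz⟩ := cii_ext i s hs (f₁ - f₂) (by rw [Preadditive.comp_sub, h, sub_self])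
      exact ⟨Y', t, MClo.of t ht, by
        rw [← sub_eq_zero, ← Preadditive.sub_comp]
        exact hz⟩
  | id M =>
      intro Y f₁ f₂ h
      simp only [id_comp] at h
      exact ⟨Y, 𝟙 Y, MClo.id Y, by rw [h]⟩
  | comp u v hu hv ihu ihv =>
      intro Y f₁ f₂ h
      rw [assoc, assoc] at h
      obtain ⟨Y₁, t₁, ht₁, hc₁⟩ := ihu (v ≫ f₁) (v ≫ f₂) h
      rw [assoc, assoc] at hc₁
      obtain ⟨Y₂, t₂, ht₂, hc₂⟩ := ihv (f₁ ≫ t₁) (f₂ ≫ t₁) hc₁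
      exact ⟨Y₂, t₁ ≫ t₂, MClo.comp _ _ ht₁ ht₂, by rw [← assoc, ← assoc]; rw [assoc, assoc] at hc₂ ⊢; exact hc₂⟩

end

section
variable (i : D ⥤ C)

lemma mclo_hasLeftCalc [i.CommShift ℤ] :
    (MClo (coneInImage i)).HasLeftCalculusOfFractions where
  exists_leftFraction X Y φ := by
    obtain ⟨X', s, hs, f, rfl⟩ := φ.cases
    obtain ⟨Y', t, g, ht, hc⟩ := mclo_ore i s hs f
    exact ⟨⟨g, t, ht⟩, hc⟩
  ext X' X Y f₁ f₂ s hs h := by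
    obtain ⟨Y', t, ht, hc⟩ := mclo_ext i s hs f₁ f₂ h
    exact ⟨Y', t, ht, hc⟩

lemma j_isLocalization_mclo [i.CommShift ℤ] [i.IsTriangulated]
    (j : C ⥤ E) [j.IsLocalization (coneInImage i)] :
    j.IsLocalization (MClo (coneInImage i)) := by
  haveI h1 : (𝟭 C).IsLocalization (MorphismProperty.isomorphisms C) :=
    Functor.IsLocalization.for_id _ (le_refl _)
  have hinv : (MClo (coneInImage i)).IsInvertedBy (𝟭 C ⋙ j) := by
    intro X Y f hf
    induction hf with
    | of f hf => exact Localization.inverts j (coneInImage i) f hf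
    | id X => rw [CategoryTheory.Functor.map_id]; infer_instance
    | comp f g hf hg ihf ihg =>
        rw [Functor.map_comp]
        exact @IsIso.comp_isIso _ _ _ _ _ _ _ ihf ihg
  have hle : MorphismProperty.isomorphisms C ≤ MClo (coneInImage i) := by
    intro X Y f hf
    haveI : IsIso f := hf
    exact MClo.of f (cii_of_isIso i f)
  have hmap : coneInImage i ≤ (MClo (coneInImage i)).map (𝟭 C) := by
    intro X Y f hf
    exact ⟨X, Y, f, MClo.of f hf, ⟨Iso.refl _⟩⟩
  haveI := Functor.IsLocalization.comp (L₁ := 𝟭 C) (W₁ := MorphismProperty.isomorphisms C)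
    (L₂ := j) (W₂ := coneInImage i) (MClo (coneInImage i)) hinv hle hmap
  exact Functor.IsLocalization.of_iso _ (Functor.leftUnitor j)

/-- morphisms factoring through an object in the image of `i` -/
def FactorsThruIm : MorphismProperty C :=
  fun X Y f => ∃ (Z : D) (u : X ⟶ i.obj Z) (v : i.obj Z ⟶ Y), f = u ≫ v

open ZeroObject in
lemma factorsThruIm_zero (X Y : C) : FactorsThruIm i (0 : X ⟶ Y) :=
  ⟨0, 0, 0, by simp⟩

lemma factors_step [i.Full] [i.Faithful] [i.CommShift ℤ] [i.IsTriangulated]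
    {Y Y' : C} {t : Y ⟶ Y'} (ht : coneInImage i t)
    {X : C} (f : X ⟶ Y) (hf : FactorsThruIm i (f ≫ t)) : FactorsThruIm i f := by
  obtain ⟨Z₀, q, r, hTt⟩ := ht
  obtain ⟨Z₁, u, v, huv⟩ := hf
  obtain ⟨ψ, hψ⟩ : ∃ ψ : Z₁ ⟶ Z₀, i.map ψ = v ≫ q := ⟨i.preimage (v ≫ q), i.map_preimage _⟩
  obtain ⟨Z₂, α, β, hTψ⟩ := distinguished_cocone_triangle ψ
  have hTψ' := i.map_distinguished _ (inv_rot_of_distTriang _ hTψ)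
  have hu0 : u ≫ (i.mapTriangle.obj (Triangle.mk ψ α β).invRotate).mor₂ = 0 := by
    have e1 : (i.mapTriangle.obj (Triangle.mk ψ α β).invRotate).mor₂ = i.map ψ := rfl
    have e2 : t ≫ q = 0 := comp_distTriang_mor_zero₁₂ _ hTt
    rw [e1, hψ]
    exact (assoc _ _ _).symm.trans ((congrArg (· ≫ q) huv.symm).trans ((assoc _ _ _).trans ((congrArg (f ≫ ·) e2).trans comp_zero)))
  obtain ⟨w, hw⟩ := Triangle.coyoneda_exact₂ _ hTψ' u hu0
  have hm : ((i.mapTriangle.obj (Triangle.mk ψ α β).invRotate).mor₁ ≫ v) ≫ q = 0 := by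
    have e3 : (i.mapTriangle.obj (Triangle.mk ψ α β).invRotate).mor₁ ≫
        (i.mapTriangle.obj (Triangle.mk ψ α β).invRotate).mor₂ = 0 :=
      comp_distTriang_mor_zero₁₂ _ hTψ'
    exact (assoc _ _ _).trans ((congrArg (_ ≫ ·) hψ.symm).trans e3)
  obtain ⟨h', hh'⟩ := Triangle.coyoneda_exact₂ _ hTt _ hm
  have hft : (f - (w ≫ h' : X ⟶ Y)) ≫ t = 0 := by
    rw [Preadditive.sub_comp]
    have e4 : (i.mapTriangle.obj (Triangle.mk ψ α β).invRotate).mor₁ ≫ v = h' ≫ t := hh'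
    have e5 : (w ≫ h') ≫ t = f ≫ t := (assoc _ _ _).trans ((congrArg (w ≫ ·) e4.symm).trans
      ((assoc _ _ _).symm.trans ((congrArg (· ≫ v) hw.symm).trans huv.symm)))
    exact (congrArg (f ≫ t - ·) e5).trans (sub_self _)
  have hT2 := inv_rot_of_distTriang _ hTt
  obtain ⟨g₂, hg₂⟩ := Triangle.coyoneda_exact₂ _ hT2 (f - (w ≫ h' : X ⟶ Y)) hft
  set κ := (i.commShiftIso (-1:ℤ)).app Z₀ with hκ
  haveI : PreservesBinaryBiproducts i := preservesBinaryBiproducts_of_preservesBiproducts i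
  refine ⟨((Triangle.mk ψ α β).invRotate.obj₁) ⊞ (Z₀⟦(-1:ℤ)⟧),
    biprod.lift w (g₂ ≫ κ.inv) ≫ (i.mapBiprod _ _).inv,
    (i.mapBiprod _ _).hom ≫ biprod.desc h'
      (κ.hom ≫ (Triangle.mk t q r).invRotate.mor₁), ?_⟩
  refine Eq.trans ?_ ((assoc _ _ _).trans (congrArg (_ ≫ ·) (Iso.inv_hom_id_assoc _ _))).symm
  refine Eq.trans ?_ biprod.lift_desc.symm
  refine Eq.trans ?_ (congrArg (w ≫ h' + ·) ((assoc _ _ _).trans (congrArg (g₂ ≫ ·) (κ.inv_hom_id_assoc _)))).symm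
  exact (add_sub_cancel (w ≫ h') f).symm.trans (congrArg (w ≫ h' + ·) hg₂)

lemma factors_descend [i.Full] [i.Faithful] [i.CommShift ℤ] [i.IsTriangulated]
    {Y Y' : C} (t : Y ⟶ Y') (ht : MClo (coneInImage i) t) :
    ∀ {X : C} (f : X ⟶ Y), FactorsThruIm i (f ≫ t) → FactorsThruIm i f := by
  induction ht with
  | of t ht => exact fun f hf => factors_step i ht f hf
  | id M => intro X f hf; simpa using hf
  | comp t₁ t₂ h₁ h₂ ih₁ ih₂ =>
      intro X f hf
      rw [← assoc] at hf
      exact ih₁ f (ih₂ (f ≫ t₁) hf)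

end

section
variable (i : D ⥤ C) [i.Full] [i.Faithful] [i.CommShift ℤ] [i.IsTriangulated]

/-- key orthogonality: a morphism from a `wa`-non-negative object to the 1-shift of a
`wb`-non-positive object vanishes as soon as it factors through the image of `i`. -/
lemma img_sandwich_zero (wD : WeightStructure D) (wa wb : WeightStructure C)
    (hiaL : ∀ X : D, wD.LE X → wa.LE (i.obj X)) (hibG : ∀ X : D, wD.GE X → wb.GE (i.obj X))
    {X L : C} (hX : wa.GE X) (hL : wb.LE L)
    {Z : D} (u : X ⟶ i.obj Z) (v : i.obj Z ⟶ L⟦(1:ℤ)⟧) : u ≫ v = 0 := by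
  obtain ⟨A, B, hA, hB, a, p, q, hT⟩ := wD.weight_decomposition (Z⟦(-1:ℤ)⟧)
  have hTC := i.map_distinguished _ (rot_of_distTriang _ hT)
  set κ : (i.mapTriangle.obj (Triangle.mk a p q).rotate).obj₃ ≅ i.obj Z :=
    i.mapIso ((shiftEquiv D (1:ℤ)).counitIso.app Z) with hκ
  have h1 : (u ≫ κ.inv) ≫ (i.mapTriangle.obj (Triangle.mk a p q).rotate).mor₃ = 0 :=
    wa.orthogonality _ hX (hiaL A hA)
  obtain ⟨g, hg⟩ := Triangle.coyoneda_exact₃ _ hTC (u ≫ κ.inv) h1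
  have h2 : (i.mapTriangle.obj (Triangle.mk a p q).rotate).mor₂ ≫ κ.hom ≫ v = 0 :=
    wb.orthogonality _ (hibG B hB) hL
  have : u ≫ v = g ≫ ((i.mapTriangle.obj (Triangle.mk a p q).rotate).mor₂ ≫ κ.hom ≫ v) := by
    rw [← assoc, ← hg, assoc, κ.inv_hom_id_assoc]
  rw [this, h2, comp_zero]

/-- key vanishing through the localization -/
lemma crux (j : C ⥤ E) [j.CommShift ℤ] [j.IsTriangulated] [j.IsLocalization (coneInImage i)]
    (wD : WeightStructure D) (wE : WeightStructure E) (wa wb : WeightStructure C)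
    (hiaL : ∀ X : D, wD.LE X → wa.LE (i.obj X)) (hibG : ∀ X : D, wD.GE X → wb.GE (i.obj X))
    (hjaG : ∀ X : C, wa.GE X → wE.GE (j.obj X)) (hjbL : ∀ X : C, wb.LE X → wE.LE (j.obj X))
    {X L : C} (hX : wa.GE X) (hL : wb.LE L) (f : X ⟶ L⟦(1:ℤ)⟧) : f = 0 := by
  haveI := j_isLocalization_mclo i j
  haveI := mclo_hasLeftCalc i
  have hj : j.map f = j.map (0 : X ⟶ L⟦(1:ℤ)⟧) := by
    rw [j.map_zero]
    have h0 : j.map f ≫ ((j.commShiftIso (1:ℤ)).hom.app L) = 0 :=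
      wE.orthogonality _ (hjaG X hX) (hjbL L hL)
    rw [← cancel_mono ((j.commShiftIso (1:ℤ)).hom.app L), h0, zero_comp]
  obtain ⟨Y', t, ht, hft⟩ :=
    (MorphismProperty.map_eq_iff_postcomp j (MClo (coneInImage i)) f 0).mp hj
  rw [zero_comp] at hft
  have h1 : FactorsThruIm i (f ≫ t) := by rw [hft]; exact factorsThruIm_zero i _ _
  obtain ⟨Z, u, v, huv⟩ := factors_descend i t ht f h1
  rw [huv]
  exact img_sandwich_zero i wD wa wb hiaL hibG hX hL u v

end

/-- let `D →^{i} C →^{j} E` be a short exact sequence of triangulated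
categories (`i` a full embedding, `j` the Verdier localization of `C` by the image of `i`,
i.e. the localization at the class of morphisms whose cone lies in the image of `i`), and
let `wD`, `wE` be weight structures on `D` and `E`. Then there is at most one weight
structure on `C` making both `i` and `j` weight-exact. -/
theorem glued_weight_structure_unique
    (i : D ⥤ C) [i.Full] [i.Faithful] [i.CommShift ℤ] [i.IsTriangulated]
    (j : C ⥤ E) [j.CommShift ℤ] [j.IsTriangulated] [j.IsLocalization (coneInImage i)]
    (wD : WeightStructure D) (wE : WeightStructure E)
    (w₁ w₂ : WeightStructure C)
    (hi₁L : ∀ X : D, wD.LE X → w₁.LE (i.obj X)) (hi₁G : ∀ X : D, wD.GE X → w₁.GE (i.obj X))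
    (hj₁L : ∀ X : C, w₁.LE X → wE.LE (j.obj X)) (hj₁G : ∀ X : C, w₁.GE X → wE.GE (j.obj X))
    (hi₂L : ∀ X : D, wD.LE X → w₂.LE (i.obj X)) (hi₂G : ∀ X : D, wD.GE X → w₂.GE (i.obj X))
    (hj₂L : ∀ X : C, w₂.LE X → wE.LE (j.obj X)) (hj₂G : ∀ X : C, w₂.GE X → wE.GE (j.obj X)) :
    w₁ = w₂ := by
  have c12 : ∀ {X L : C}, w₁.GE X → w₂.LE L → ∀ (f : X ⟶ L⟦(1:ℤ)⟧), f = 0 :=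
    fun hX hL f => crux i j wD wE w₁ w₂ hi₁L hi₂G hj₁G hj₂L hX hL f
  have c21 : ∀ {X L : C}, w₂.GE X → w₁.LE L → ∀ (f : X ⟶ L⟦(1:ℤ)⟧), f = 0 :=
    fun hX hL f => crux i j wD wE w₂ w₁ hi₂L hi₁G hj₂G hj₁L hX hL f
  have hGE : w₁.GE = w₂.GE := by
    funext X
    apply propext
    constructor
    · intro hX
      exact WS_GE_of_orth w₂ X (fun L hL f => c12 hX hL f)
    · intro hX
      exact WS_GE_of_orth w₁ X (fun L hL f => c21 hX hL f)
  have hLE : w₁.LE = w₂.LE := by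
    funext X
    apply propext
    constructor
    · intro hX
      exact WS_LE_of_orth w₂ X (fun G hG f => c21 hG hX f)
    · intro hX
      exact WS_LE_of_orth w₁ X (fun G hG f => c12 hG hX f)
  cases w₁
  cases w₂
  dsimp at hGE hLE
  subst hGE hLE
  rfl
end
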